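/- arXiv:0907.3097 — 2 statements merged into one kernel-verified Lean document; each statement's English description precedes it below -/
import Mathlib

section
/- Let ℓ ≥ 3 and m ≥ 1 be integers with 2m ≤ ℓ, let {j_1,k_1},…,{j_m,k_m} ⊆ [ℓ] be distinct pairs, and let p > 0. If the 2m elements j_1,k_1,…,j_m,k_m are all distinct, then ℙ_p(⋂_{q=1}^m M_ℓ(j_q,k_q)) = 2^{2m}·(2^{ℓ−2m})^m·p^m·(1−p)^{2^ℓ−2^{ℓ−2m}−m}·P(ℓ−2m,p); otherwise ℙ_p(⋂_{q=1}^m M_ℓ(j_q,k_q)) = 0. -/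
/-- Adjacency in the grid graph `[n]^d`: two vertices are adjacent iff they differ
by exactly 1 in a single coordinate. -/
def gridAdj (n d : ℕ) (x y : Fin d → Fin n) : Prop :=
  ∃ i, ((x i : ℕ) + 1 = (y i : ℕ) ∨ (y i : ℕ) + 1 = (x i : ℕ)) ∧ ∀ j, j ≠ i → x j = y j

/-- The grid graph `[n]^d`. -/
def gridGraph (n d : ℕ) : SimpleGraph (Fin d → Fin n) where
  Adj := gridAdj n d
  symm := by
    constructor
    rintro x y ⟨i, h1, h2⟩
    exact ⟨i, h1.symm, fun j hj => (h2 j hj).symm⟩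
  loopless := by
    constructor
    rintro x ⟨i, h1, -⟩
    omega

/-- Graph distance from a vertex to a set in the grid graph. -/
noncomputable def gridSetDist (n d : ℕ) (x : Fin d → Fin n) (S : Set (Fin d → Fin n)) : ℕ :=
  sInf (Set.image (fun y => (gridGraph n d).dist x y) S)

/-- One step of `r`-neighbour bootstrap percolation. -/
def bootStep {V : Type*} (adj : V → V → Prop) (r : ℕ) (A : Set V) : Set V :=
  A ∪ {v | r ≤ {u | adj v u ∧ u ∈ A}.ncard}

/-- The closure `[A]` of a set under `r`-neighbour bootstrap percolation. -/
def bootClosure {V : Type*} (adj : V → V → Prop) (r : ℕ) (A : Set V) : Set V :=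
  ⋃ t, (bootStep adj r)^[t] A

/-- The dimension of a cube in `[n]^d`: the sum over coordinates of
(number of values taken in that coordinate minus one). -/
noncomputable def cubeDim {n d : ℕ} (Q : Set (Fin d → Fin n)) : ℕ :=
  ∑ i : Fin d, ((Set.image (fun x => x i) Q).ncard - 1)

/-- A cube in `[n]^d` is a (nonempty) product of integer intervals. -/
def IsCube {n d : ℕ} (Q : Set (Fin d → Fin n)) : Prop :=
  ∃ lo hi : Fin d → Fin n, (∀ i, lo i ≤ hi i) ∧
    Q = {x | ∀ i, lo i ≤ x i ∧ x i ≤ hi i}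

/-- A hypercube in `[n]^d` is a cube all of whose sides have length 1 or 2,
i.e. a copy of some `[2]^m`. -/
def IsHypercube {n d : ℕ} (Q : Set (Fin d → Fin n)) : Prop :=
  ∃ lo hi : Fin d → Fin n, (∀ i, lo i ≤ hi i ∧ (hi i : ℕ) ≤ (lo i : ℕ) + 1) ∧
    Q = {x | ∀ i, lo i ≤ x i ∧ x i ≤ hi i}

/-- `Q` is internally spanned by `A`: the bootstrap closure of `A ∩ Q` is `Q`. -/
def IntSpans (n d : ℕ) (A Q : Set (Fin d → Fin n)) : Prop :=
  bootClosure (gridAdj n d) 2 (A ∩ Q) = Q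

/-- A set is constant on the coordinates in `J`. -/
def ConstOn {n d : ℕ} (J : Set (Fin d)) (C : Set (Fin d → Fin n)) : Prop :=
  ∀ i ∈ J, ∀ x ∈ C, ∀ y ∈ C, x i = y i

/-- `C` belongs to `Q⟨J⟩`: `C` is a maximal subcube of `Q` constant on the
coordinates in `J`. -/
def MaxConstSubcube (n d : ℕ) (Q : Set (Fin d → Fin n)) (J : Set (Fin d))
    (C : Set (Fin d → Fin n)) : Prop :=
  IsCube C ∧ C ⊆ Q ∧ ConstOn J C ∧
    ∀ C', IsCube C' → C' ⊆ Q → ConstOn J C' → C ⊆ C' → C' = C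

/-- `{j,k}` is a final pair for `A` in `Q`. -/
def FinalPair (n d : ℕ) (A Q : Set (Fin d → Fin n)) (j k : Fin d) : Prop :=
  IntSpans n d A Q ∧
    ∃ C, MaxConstSubcube n d Q {j, k} C ∧ IntSpans n d A C ∧ (A \ C).ncard = 1

/-- `{i}` is a final element for `A` in `Q`. -/
def FinalElt (n d : ℕ) (A Q : Set (Fin d → Fin n)) (i : Fin d) : Prop :=
  IntSpans n d A Q ∧
    ∃ C, MaxConstSubcube n d Q {i} C ∧ IntSpans n d A C ∧ (A \ C).ncard = 1

/-- `A` sequentially spans the hypercube `Q` (of dimension `2t`):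
`|A| = t+1` and `A` admits an ordering `(a 0, …, a t)` with
`dist (a (j+1), [{a 0,…,a j}]) = 2` for all `j < t`. -/
def SeqSpans (n d : ℕ) (A Q : Set (Fin d → Fin n)) : Prop :=
  ∃ t : ℕ, cubeDim Q = 2 * t ∧ A ⊆ Q ∧ A.ncard = t + 1 ∧
    bootClosure (gridAdj n d) 2 A = Q ∧
    ∃ a : Fin (t + 1) → (Fin d → Fin n), Function.Injective a ∧ Set.range a = A ∧
      ∀ j : Fin t, gridSetDist n d (a j.succ)
        (bootClosure (gridAdj n d) 2 (a '' {i | (i : ℕ) ≤ (j : ℕ)})) = 2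

/-- `{j,k}` is an ending for `A` (in the full cube): some `A' ⊆ A` sequentially
spans one of the maximal subcubes constant on `{j,k}`. -/
def EndingPair (n d : ℕ) (A : Set (Fin d → Fin n)) (j k : Fin d) : Prop :=
  ∃ A', A' ⊆ A ∧ ∃ C, MaxConstSubcube n d Set.univ {j, k} C ∧ SeqSpans n d A' C

/-- `Δ(b,C)`: the set of directions in which the vertex `b` and the cube `C`
are both constant and differ. -/
def Delta {n d : ℕ} (b : Fin d → Fin n) (C : Set (Fin d → Fin n)) : Set (Fin d) :=
  {i | (∀ x ∈ C, ∀ y ∈ C, x i = y i) ∧ ∀ x ∈ C, x i ≠ b i}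

/-- The probability of an event `E` for a random subset `A ~ Bin(V,p)`,
each element included independently with probability `p`. -/
noncomputable def binProb {V : Type*} [Fintype V] (p : ℝ) (E : Finset V → Prop) : ℝ :=
  ∑ A : Finset V,
    Set.indicator {B | E B} (fun B => p ^ B.card * (1 - p) ^ (Fintype.card V - B.card)) A

/-- The expectation of `f` for a random subset `A ~ Bin(V,p)`. -/
noncomputable def binExp {V : Type*} [Fintype V] (p : ℝ) (f : Finset V → ℝ) : ℝ :=
  ∑ A : Finset V, f A * (p ^ A.card * (1 - p) ^ (Fintype.card V - A.card))

/-- `P(ℓ,p)`: the probability that `A ~ Bin([2]^ℓ,p)` internally spans `[2]^ℓ`. -/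
noncomputable def Pprob (ℓ : ℕ) (p : ℝ) : ℝ :=
  binProb p (fun A : Finset (Fin ℓ → Fin 2) =>
    bootClosure (gridAdj 2 ℓ) 2 (↑A : Set (Fin ℓ → Fin 2)) = Set.univ)

/-- `Q(2ℓ,p)`: the probability that `A ~ Bin([2]^{2ℓ},p)` sequentially
internally spans `[2]^{2ℓ}`. -/
noncomputable def Qprob (ℓ : ℕ) (p : ℝ) : ℝ :=
  binProb p (fun A : Finset (Fin (2 * ℓ) → Fin 2) =>
    SeqSpans 2 (2 * ℓ) (↑A : Set (Fin (2 * ℓ) → Fin 2)) Set.univ)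

/-- `|𝒮(ℓ)|`: the number of `(ℓ+1)`-subsets of `[2]^{2ℓ}` which sequentially span it. -/
noncomputable def Scard (ℓ : ℕ) : ℕ :=
  {A : Set (Fin (2 * ℓ) → Fin 2) | SeqSpans 2 (2 * ℓ) A Set.univ}.ncard

/-- The probability that `A ~ Bin([n]^d,p)` percolates in `r`-neighbour
bootstrap percolation. -/
noncomputable def percProb (n d r : ℕ) (p : ℝ) : ℝ :=
  binProb p (fun A : Finset (Fin d → Fin n) =>
    bootClosure (gridAdj n d) r (↑A : Set (Fin d → Fin n)) = Set.univ)

/-- The critical probability `p_c([n]^d, r)`. -/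
noncomputable def pc (n d r : ℕ) : ℝ :=
  sInf {p : ℝ | 0 ≤ p ∧ p ≤ 1 ∧ 1 / 2 ≤ percProb n d r p}

/-- The series `x ↦ ∑_{k≥0} (-1)^k x^k / (2^{k²-k} k!)`, whose smallest positive
root is `λ ≈ 1.166`. -/
noncomputable def lamSeries (x : ℝ) : ℝ :=
  ∑' k : ℕ, (-1 : ℝ) ^ k * x ^ k / (2 ^ (k ^ 2 - k) * (Nat.factorial k))


set_option linter.unusedSectionVars false

namespace BP13
open Set

section Boot
variable {V : Type*} [Finite V] (adj : V → V → Prop)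

lemma bootStep_subset (A : Set V) : A ⊆ bootStep adj 2 A := Set.subset_union_left

lemma iterate_subset_closure (A : Set V) (t : ℕ) :
    (bootStep adj 2)^[t] A ⊆ bootClosure adj 2 A :=
  Set.subset_iUnion (fun t => (bootStep adj 2)^[t] A) t

lemma subset_bootClosure (A : Set V) : A ⊆ bootClosure adj 2 A := iterate_subset_closure adj A 0

lemma iterate_mono_t (A : Set V) : Monotone (fun t => (bootStep adj 2)^[t] A) := by
  apply monotone_nat_of_le_succ
  intro t
  rw [Function.iterate_succ_apply']
  exact bootStep_subset adj _

/-- A set is closed for 2-neighbour bootstrap if no vertex has two distinct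
neighbours in it without being in it. -/
def Closed2 (W : Set V) : Prop :=
  ∀ v u₁ u₂, adj v u₁ → adj v u₂ → u₁ ∈ W → u₂ ∈ W → u₁ ≠ u₂ → v ∈ W

variable {adj}

lemma mem_bootStep_of_two {A : Set V} {v u₁ u₂ : V} (h1 : adj v u₁) (h2 : adj v u₂)
    (m1 : u₁ ∈ A) (m2 : u₂ ∈ A) (hne : u₁ ≠ u₂) : v ∈ bootStep adj 2 A := by
  refine Or.inr ?_
  have h : 1 < ({u | adj v u ∧ u ∈ A} : Set V).ncard := by
    rw [Set.one_lt_ncard_iff (Set.toFinite _)]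
    exact ⟨u₁, u₂, ⟨h1, m1⟩, ⟨h2, m2⟩, hne⟩
  exact h

lemma two_of_mem_bootStep {A : Set V} {v : V} (hv : v ∈ bootStep adj 2 A) (hvA : v ∉ A) :
    ∃ u₁ u₂, adj v u₁ ∧ adj v u₂ ∧ u₁ ∈ A ∧ u₂ ∈ A ∧ u₁ ≠ u₂ := by
  rcases hv with hv | hv
  · exact absurd hv hvA
  · have h : 1 < ({u | adj v u ∧ u ∈ A} : Set V).ncard := hv
    rw [Set.one_lt_ncard_iff (Set.toFinite _)] at h
    obtain ⟨a, b, ⟨ha1, ha2⟩, ⟨hb1, hb2⟩, hab⟩ := h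
    exact ⟨a, b, ha1, hb1, ha2, hb2, hab⟩

lemma closure_subset_of_closed {A W : Set V} (hAW : A ⊆ W) (hW : Closed2 adj W) :
    bootClosure adj 2 A ⊆ W := by
  refine Set.iUnion_subset fun t => ?_
  induction t with
  | zero => simpa using hAW
  | succ t ih =>
    rw [Function.iterate_succ_apply']
    intro v hv
    by_cases h : v ∈ (bootStep adj 2)^[t] A
    · exact ih h
    · obtain ⟨u₁, u₂, a1, a2, m1, m2, hne⟩ := two_of_mem_bootStep hv h
      exact hW v u₁ u₂ a1 a2 (ih m1) (ih m2) hne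

lemma bootClosure_closed (A : Set V) : Closed2 adj (bootClosure adj 2 A) := by
  intro v u₁ u₂ h1 h2 m1 m2 hne
  obtain ⟨s1, ht1⟩ := Set.mem_iUnion.1 m1
  obtain ⟨s2, ht2⟩ := Set.mem_iUnion.1 m2
  have h₁ : u₁ ∈ (bootStep adj 2)^[max s1 s2] A := iterate_mono_t adj A (le_max_left _ _) ht1
  have h₂ : u₂ ∈ (bootStep adj 2)^[max s1 s2] A := iterate_mono_t adj A (le_max_right _ _) ht2
  refine iterate_subset_closure adj A (max s1 s2 + 1) ?_
  rw [Function.iterate_succ_apply']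
  exact mem_bootStep_of_two h1 h2 h₁ h₂ hne

lemma mem_closure_of_two {A : Set V} {v u₁ u₂ : V} (h1 : adj v u₁) (h2 : adj v u₂)
    (m1 : u₁ ∈ bootClosure adj 2 A) (m2 : u₂ ∈ bootClosure adj 2 A) (hne : u₁ ≠ u₂) :
    v ∈ bootClosure adj 2 A :=
  bootClosure_closed A v u₁ u₂ h1 h2 m1 m2 hne

lemma bootClosure_mono {A B : Set V} (h : A ⊆ B) :
    bootClosure adj 2 A ⊆ bootClosure adj 2 B :=
  closure_subset_of_closed (h.trans (subset_bootClosure adj B)) (bootClosure_closed B)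

lemma closure_closure_union {X Y : Set V} :
    bootClosure adj 2 (bootClosure adj 2 X ∪ Y) ⊆ bootClosure adj 2 (X ∪ Y) := by
  apply closure_subset_of_closed _ (bootClosure_closed _)
  apply Set.union_subset
  · exact bootClosure_mono Set.subset_union_left
  · exact Set.subset_union_right.trans (subset_bootClosure adj _)

lemma closed_subsingleton {W : Set V} (h : W.Subsingleton) : Closed2 adj W :=
  fun _ _ _ _ _ m1 m2 hne => absurd (h m1 m2) hne

lemma closure_subsingleton {A : Set V} (h : A.Subsingleton) :
    bootClosure adj 2 A = A :=
  le_antisymm (closure_subset_of_closed le_rfl (closed_subsingleton h)) (subset_bootClosure adj A)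

end Boot

end BP13
namespace BP13
open Set Function

section Cube
variable {ℓ : ℕ}

lemma fin2_eq_of_ne {a b c : Fin 2} (h1 : a ≠ c) (h2 : b ≠ c) : a = b := by
  revert a b c; decide

lemma fin2_adj_val {a b : Fin 2} : ((a:ℕ)+1 = (b:ℕ) ∨ (b:ℕ)+1 = (a:ℕ)) ↔ a ≠ b := by
  have ha := a.isLt; have hb := b.isLt
  rw [Ne, Fin.ext_iff]
  omega

lemma adj_iff {x y : Fin ℓ → Fin 2} :
    gridAdj 2 ℓ x y ↔ ∃ i, x i ≠ y i ∧ ∀ j, j ≠ i → x j = y j := by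
  unfold gridAdj
  refine exists_congr fun i => and_congr_left fun _ => fin2_adj_val

lemma adj_update {x : Fin ℓ → Fin 2} {i : Fin ℓ} {v : Fin 2} (h : v ≠ x i) :
    gridAdj 2 ℓ x (Function.update x i v) := by
  refine adj_iff.2 ⟨i, by simp [h.symm], fun t ht => by simp [Function.update_of_ne ht]⟩

/-- The subcube fixing the coordinates in `I` to the pattern `c`. -/
def Kset (I : Set (Fin ℓ)) (c : Fin ℓ → Fin 2) : Set (Fin ℓ → Fin 2) :=
  {x | ∀ i ∈ I, x i = c i}

lemma Kset_closed (I : Set (Fin ℓ)) (c : Fin ℓ → Fin 2) :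
    Closed2 (gridAdj 2 ℓ) (Kset I c) := by
  intro v u₁ u₂ h1 h2 m1 m2 hne
  by_contra hv
  simp only [Kset, Set.mem_setOf_eq, not_forall] at hv
  obtain ⟨i₀, hi₀I, hi₀⟩ := hv
  have key : ∀ u, gridAdj 2 ℓ v u → u ∈ Kset I c → u = Function.update v i₀ (c i₀) := by
    intro u hadj hu
    obtain ⟨i, hne', heq⟩ := adj_iff.1 hadj
    have hii : i = i₀ := by
      by_contra hii
      exact hi₀ ((heq i₀ (fun h => hii h.symm)).trans (hu i₀ hi₀I))
    subst hii
    funext t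
    by_cases ht : t = i
    · subst ht; simp [hu t hi₀I]
    · simp [Function.update_of_ne ht, (heq t ht).symm]
  exact hne ((key u₁ h1 m1).trans (key u₂ h2 m2).symm)

lemma closure_subset_Kset {I : Set (Fin ℓ)} {c : Fin ℓ → Fin 2} {Z : Set (Fin ℓ → Fin 2)}
    (hZ : Z ⊆ Kset I c) : bootClosure (gridAdj 2 ℓ) 2 Z ⊆ Kset I c :=
  closure_subset_of_closed hZ (Kset_closed I c)

/-- Projection onto the codimension-2 face fixing coordinates `j`, `k` to pattern `c`. -/
def proj2 (j k : Fin ℓ) (c : Fin ℓ → Fin 2) (x : Fin ℓ → Fin 2) : Fin ℓ → Fin 2 :=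
  Function.update (Function.update x j (c j)) k (c k)

lemma proj2_apply_j {j k : Fin ℓ} (hjk : j ≠ k) (c x : Fin ℓ → Fin 2) :
    proj2 j k c x j = c j := by
  simp [proj2, Function.update_of_ne hjk]

lemma proj2_apply_k {j k : Fin ℓ} (c x : Fin ℓ → Fin 2) : proj2 j k c x k = c k := by
  simp [proj2]

lemma proj2_apply_other {j k t : Fin ℓ} (htj : t ≠ j) (htk : t ≠ k) (c x : Fin ℓ → Fin 2) :
    proj2 j k c x t = x t := by
  simp [proj2, Function.update_of_ne htj, Function.update_of_ne htk]

lemma proj2_mem {j k : Fin ℓ} (hjk : j ≠ k) (c x : Fin ℓ → Fin 2) :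
    proj2 j k c x ∈ Kset {j, k} c := by
  intro i hi
  rcases hi with hi | hi
  · subst hi; exact proj2_apply_j hjk c x
  · simp only [Set.mem_singleton_iff] at hi; subst hi; exact proj2_apply_k c x

lemma proj2_eq_self {j k : Fin ℓ} {c x : Fin ℓ → Fin 2}
    (hxj : x j = c j) (hxk : x k = c k) : proj2 j k c x = x := by
  funext t
  by_cases htk : t = k
  · subst htk; simp [proj2, hxk]
  · by_cases htj : t = j
    · subst htj; simp [proj2, Function.update_of_ne htk, hxj]
    · exact proj2_apply_other htj htk c x

lemma proj2_of_mem {j k : Fin ℓ} {c x : Fin ℓ → Fin 2} (hx : x ∈ Kset {j,k} c) :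
    proj2 j k c x = x :=
  proj2_eq_self (hx j (by simp)) (hx k (by simp))

lemma proj2_update_other {j k i : Fin ℓ} (hjk : j ≠ k) (hij : i ≠ j) (hik : i ≠ k)
    {c v u : Fin ℓ → Fin 2} (hvu : ∀ t, t ≠ i → v t = u t) :
    proj2 j k c u = Function.update (proj2 j k c v) i (u i) := by
  funext t
  by_cases hti : t = i
  · subst hti; simp [proj2_apply_other hij hik]
  · rw [Function.update_of_ne hti]
    by_cases htk : t = k
    · subst htk; rw [proj2_apply_k, proj2_apply_k]
    · by_cases htj : t = j
      · subst htj; rw [proj2_apply_j hjk, proj2_apply_j hjk]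
      · rw [proj2_apply_other htj htk, proj2_apply_other htj htk]
        exact (hvu t hti).symm

end Cube
end BP13
namespace BP13
open Set Function

section StripGrow
variable {ℓ : ℕ}

lemma proj2_congr {j k : Fin ℓ} (hjk : j ≠ k) {c u v : Fin ℓ → Fin 2}
    (h : ∀ t, t ≠ j → t ≠ k → u t = v t) : proj2 j k c u = proj2 j k c v := by
  funext t
  by_cases htk : t = k
  · subst htk; rw [proj2_apply_k, proj2_apply_k]
  · by_cases htj : t = j
    · subst htj; rw [proj2_apply_j hjk, proj2_apply_j hjk]
    · rw [proj2_apply_other htj htk, proj2_apply_other htj htk]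
      exact h t htj htk

/-- Key stripping lemma: a point flipped in both fixed coordinates of a
codimension-2 face does not help infect anything inside the face. -/
lemma strip {j k : Fin ℓ} (hjk : j ≠ k) {c : Fin ℓ → Fin 2} {Z : Set (Fin ℓ → Fin 2)}
    (hZ : Z ⊆ Kset {j,k} c) {b : Fin ℓ → Fin 2} (hbj : b j ≠ c j) (hbk : b k ≠ c k) :
    bootClosure (gridAdj 2 ℓ) 2 (Z ∪ {b}) ∩ Kset {j,k} c
      = bootClosure (gridAdj 2 ℓ) 2 Z := by
  have hClK : bootClosure (gridAdj 2 ℓ) 2 Z ⊆ Kset {j,k} c := closure_subset_Kset hZ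
  apply le_antisymm
  · by_cases pb : proj2 j k c b ∈ bootClosure (gridAdj 2 ℓ) 2 Z
    · have hWclosed : Closed2 (gridAdj 2 ℓ)
          {x | proj2 j k c x ∈ bootClosure (gridAdj 2 ℓ) 2 Z} := by
        intro v u₁ u₂ h1 h2 m1 m2 hne
        obtain ⟨i₁, d1, e1⟩ := adj_iff.1 h1
        obtain ⟨i₂, d2, e2⟩ := adj_iff.1 h2
        simp only [Set.mem_setOf_eq] at m1 m2 ⊢
        by_cases hi₁ : i₁ = j ∨ i₁ = k
        · have : proj2 j k c u₁ = proj2 j k c v := by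
            refine proj2_congr hjk fun t htj htk => ?_
            refine (e1 t ?_).symm
            rcases hi₁ with h | h <;> subst h
            · exact htj
            · exact htk
          rwa [this] at m1
        · push_neg at hi₁
          by_cases hi₂ : i₂ = j ∨ i₂ = k
          · have : proj2 j k c u₂ = proj2 j k c v := by
              refine proj2_congr hjk fun t htj htk => ?_
              refine (e2 t ?_).symm
              rcases hi₂ with h | h <;> subst h
              · exact htj
              · exact htk
            rwa [this] at m2
          · push_neg at hi₂
            by_cases h12 : i₁ = i₂
            · subst h12
              exfalso
              apply hne
              funext t
              by_cases ht : t = i₁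
              · subst ht
                exact fin2_eq_of_ne (Ne.symm d1) (Ne.symm d2)
              · rw [← e1 t ht, ← e2 t ht]
            · have r1 : proj2 j k c u₁
                  = Function.update (proj2 j k c v) i₁ (u₁ i₁) :=
                proj2_update_other hjk hi₁.1 hi₁.2 e1
              have r2 : proj2 j k c u₂
                  = Function.update (proj2 j k c v) i₂ (u₂ i₂) :=
                proj2_update_other hjk hi₂.1 hi₂.2 e2
              have pv1 : proj2 j k c v i₁ = v i₁ := proj2_apply_other hi₁.1 hi₁.2 c v
              have pv2 : proj2 j k c v i₂ = v i₂ := proj2_apply_other hi₂.1 hi₂.2 c v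
              have a1 : gridAdj 2 ℓ (proj2 j k c v) (proj2 j k c u₁) := by
                rw [r1]; exact adj_update (by rw [pv1]; exact Ne.symm d1)
              have a2 : gridAdj 2 ℓ (proj2 j k c v) (proj2 j k c u₂) := by
                rw [r2]; exact adj_update (by rw [pv2]; exact Ne.symm d2)
              refine mem_closure_of_two a1 a2 m1 m2 ?_
              rw [r1, r2]
              intro hcon
              have := congrFun hcon i₁
              rw [Function.update_self, Function.update_of_ne h12, pv1] at this
              exact d1 this.symm
      have hsub : bootClosure (gridAdj 2 ℓ) 2 (Z ∪ {b})
          ⊆ {x | proj2 j k c x ∈ bootClosure (gridAdj 2 ℓ) 2 Z} := by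
        refine closure_subset_of_closed (Set.union_subset ?_ ?_) hWclosed
        · intro z hz
          simp only [Set.mem_setOf_eq, proj2_of_mem (hZ hz)]
          exact subset_bootClosure _ Z hz
        · intro z hz
          simp only [Set.mem_singleton_iff] at hz
          subst hz
          exact pb
      rintro x ⟨hx1, hxK⟩
      have h' : proj2 j k c x ∈ bootClosure (gridAdj 2 ℓ) 2 Z := hsub hx1
      rwa [proj2_of_mem hxK] at h'
    · have claim : ∀ v u, gridAdj 2 ℓ v u → u ∈ bootClosure (gridAdj 2 ℓ) 2 Z →
          gridAdj 2 ℓ v b → False := by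
        intro v u hu huZ hvb
        have huK := hClK huZ
        have hukj : u j = c j := huK j (by simp)
        have hukk : u k = c k := huK k (by simp)
        obtain ⟨i, di, ei⟩ := adj_iff.1 hvb
        obtain ⟨i', di', ei'⟩ := adj_iff.1 hu
        have hij : i = j ∨ i = k := by
          by_contra hcon
          push_neg at hcon
          have h1 : i' = j := by
            by_contra hh
            exact hbj ((ei j (Ne.symm hcon.1)).symm.trans
              ((ei' j (fun h => hh h.symm)).trans hukj))
          have h2 : i' = k := by
            by_contra hh
            exact hbk ((ei k (Ne.symm hcon.2)).symm.trans
              ((ei' k (fun h => hh h.symm)).trans hukk))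
          exact hjk (h1 ▸ h2 ▸ rfl)
        apply pb
        rcases hij with hi | hi
        · subst hi
          have hi'k : i' = k := by
            by_contra hh
            exact hbk ((ei k (Ne.symm hjk)).symm.trans
              ((ei' k (fun h => hh h.symm)).trans hukk))
          subst hi'k
          have heq : proj2 i i' c b = u := by
            funext t
            by_cases htk : t = i'
            · subst htk; rw [proj2_apply_k, hukk]
            · by_cases htj : t = i
              · subst htj; rw [proj2_apply_j hjk, hukj]
              · rw [proj2_apply_other htj htk, ← ei t htj]
                exact ei' t htk
          rw [heq]; exact huZ
        · subst hi
          have hi'j : i' = j := by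
            by_contra hh
            exact hbj ((ei j hjk).symm.trans
              ((ei' j (fun h => hh h.symm)).trans hukj))
          subst hi'j
          have heq : proj2 i' i c b = u := by
            funext t
            by_cases htk : t = i
            · subst htk; rw [proj2_apply_k, hukk]
            · by_cases htj : t = i'
              · subst htj; rw [proj2_apply_j hjk, hukj]
              · rw [proj2_apply_other htj htk, ← ei t htk]
                exact ei' t htj
          rw [heq]; exact huZ
      have hW2 : Closed2 (gridAdj 2 ℓ) (bootClosure (gridAdj 2 ℓ) 2 Z ∪ {b}) := by
        intro v u₁ u₂ h1 h2 m1 m2 hne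
        rcases m1 with m1 | m1 <;> rcases m2 with m2 | m2
        · exact Or.inl (mem_closure_of_two h1 h2 m1 m2 hne)
        · simp only [Set.mem_singleton_iff] at m2; subst m2
          exact (claim v u₁ h1 m1 h2).elim
        · simp only [Set.mem_singleton_iff] at m1; subst m1
          exact (claim v u₂ h2 m2 h1).elim
        · simp only [Set.mem_singleton_iff] at m1 m2
          exact absurd (m1.trans m2.symm) hne
      have hsub2 : bootClosure (gridAdj 2 ℓ) 2 (Z ∪ {b})
          ⊆ bootClosure (gridAdj 2 ℓ) 2 Z ∪ {b} := by
        refine closure_subset_of_closed (Set.union_subset ?_ ?_) hW2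
        · exact (subset_bootClosure _ Z).trans Set.subset_union_left
        · exact Set.subset_union_right
      rintro x ⟨hx1, hxK⟩
      rcases hsub2 hx1 with hx | hx
      · exact hx
      · simp only [Set.mem_singleton_iff] at hx; subst hx
        exact absurd (hxK j (by simp)) hbj
  · intro x hx
    exact ⟨bootClosure_mono Set.subset_union_left hx, hClK hx⟩

end StripGrow
end BP13
namespace BP13
open Set Function

section Grow
variable {ℓ : ℕ}

/-- Growth lemma: a full face `Kset I c` together with a point flipped in two
of the fixed coordinates `j, k` (and agreeing with the pattern on the other
fixed coordinates) spans the face of codimension two less. -/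
lemma grow {I : Set (Fin ℓ)} {c : Fin ℓ → Fin 2} {j k : Fin ℓ} (hj : j ∈ I) (hk : k ∈ I)
    (hjk : j ≠ k) {b : Fin ℓ → Fin 2} (hb : ∀ i ∈ I, i ≠ j → i ≠ k → b i = c i)
    (hbj : b j ≠ c j) (hbk : b k ≠ c k) :
    Kset (I \ {j,k}) c ⊆ bootClosure (gridAdj 2 ℓ) 2 (Kset I c ∪ {b}) := by
  classical
  set Cl := bootClosure (gridAdj 2 ℓ) 2 (Kset I c ∪ {b}) with hCl
  have hK : Kset I c ⊆ Cl := Set.subset_union_left.trans (subset_bootClosure _ _)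
  have hbCl : b ∈ Cl := (Set.subset_union_right.trans (subset_bootClosure _ _)) rfl
  -- Step A
  have stepA : ∀ n : ℕ, ∀ y, y ∈ Kset I c →
      (Finset.univ.filter fun i => y i ≠ b i).card ≤ n →
      Function.update y j (b j) ∈ Cl ∧ Function.update y k (b k) ∈ Cl := by
    intro n
    induction n with
    | zero =>
      intro y hy hcard
      exfalso
      have : j ∈ Finset.univ.filter fun i => y i ≠ b i := by
        simp only [Finset.mem_filter, Finset.mem_univ, true_and]
        rw [hy j hj]; exact fun h => hbj h.symm
      have := Finset.card_pos.2 ⟨j, this⟩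
      omega
    | succ n ih =>
      intro y hy hcard
      by_cases hex : ∃ i₀, i₀ ≠ j ∧ i₀ ≠ k ∧ y i₀ ≠ b i₀
      · obtain ⟨i₀, hi₀j, hi₀k, hi₀⟩ := hex
        have hi₀I : i₀ ∉ I := fun hmem => hi₀ (by rw [hy i₀ hmem, hb i₀ hmem hi₀j hi₀k])
        set y' := Function.update y i₀ (b i₀) with hy'
        have hy'K : y' ∈ Kset I c := by
          intro i hi
          have hne : i ≠ i₀ := by rintro rfl; exact hi₀I hi
          rw [hy', Function.update_of_ne hne]
          exact hy i hi
        have hcard' : (Finset.univ.filter fun i => y' i ≠ b i).card ≤ n := by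
          have hset : (Finset.univ.filter fun i => y' i ≠ b i)
              = (Finset.univ.filter fun i => y i ≠ b i).erase i₀ := by
            ext t
            simp only [Finset.mem_filter, Finset.mem_univ, true_and, Finset.mem_erase]
            by_cases ht : t = i₀
            · subst ht; simp [hy', Function.update_self]
            · simp [hy', Function.update_of_ne ht, ht]
          have hmem : i₀ ∈ Finset.univ.filter fun i => y i ≠ b i := by
            simp only [Finset.mem_filter, Finset.mem_univ, true_and]; exact hi₀
          rw [hset, Finset.card_erase_of_mem hmem]
          omega
        obtain ⟨ihj, ihk⟩ := ih y' hy'K hcard'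
        constructor
        · -- update y j (b j) via neighbours y and update y' j (b j)
          have hcomm : Function.update y' j (b j)
              = Function.update (Function.update y j (b j)) i₀ (b i₀) := by
            rw [hy', Function.update_comm hi₀j]
          have a1 : gridAdj 2 ℓ (Function.update y j (b j)) y := by
            refine adj_iff.2 ⟨j, ?_, fun t ht => by rw [Function.update_of_ne ht]⟩
            rw [Function.update_self, hy j hj]
            exact hbj
          have a2 : gridAdj 2 ℓ (Function.update y j (b j)) (Function.update y' j (b j)) := by
            rw [hcomm]
            refine adj_update ?_
            rw [Function.update_of_ne hi₀j]
            exact fun h => hi₀ h.symm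
          refine mem_closure_of_two a1 a2 (hK hy) ihj ?_
          intro hcon
          have := congrFun hcon j
          rw [Function.update_self] at this
          exact hbj (this.symm.trans (hy j hj))
        · have hcomm : Function.update y' k (b k)
              = Function.update (Function.update y k (b k)) i₀ (b i₀) := by
            rw [hy', Function.update_comm hi₀k]
          have a1 : gridAdj 2 ℓ (Function.update y k (b k)) y := by
            refine adj_iff.2 ⟨k, ?_, fun t ht => by rw [Function.update_of_ne ht]⟩
            rw [Function.update_self, hy k hk]
            exact hbk
          have a2 : gridAdj 2 ℓ (Function.update y k (b k)) (Function.update y' k (b k)) := by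
            rw [hcomm]
            refine adj_update ?_
            rw [Function.update_of_ne hi₀k]
            exact fun h => hi₀ h.symm
          refine mem_closure_of_two a1 a2 (hK hy) ihk ?_
          intro hcon
          have := congrFun hcon k
          rw [Function.update_self] at this
          exact hbk (this.symm.trans (hy k hk))
      · -- base: y agrees with b outside {j,k}
        push_neg at hex
        have hyb : ∀ t, t ≠ j → t ≠ k → y t = b t := fun t h1 h2 => hex t h1 h2
        constructor
        · have a1 : gridAdj 2 ℓ (Function.update y j (b j)) y := by
            refine adj_iff.2 ⟨j, ?_, fun t ht => by rw [Function.update_of_ne ht]⟩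
            rw [Function.update_self, hy j hj]
            exact hbj
          have a2 : gridAdj 2 ℓ (Function.update y j (b j)) b := by
            refine adj_iff.2 ⟨k, ?_, fun t ht => ?_⟩
            · rw [Function.update_of_ne (Ne.symm hjk), hy k hk]
              exact fun h => hbk h.symm
            · by_cases htj : t = j
              · subst htj; rw [Function.update_self]
              · rw [Function.update_of_ne htj]
                exact hyb t htj ht
          refine mem_closure_of_two a1 a2 (hK hy) hbCl ?_
          intro hcon
          have := congrFun hcon j
          rw [hy j hj] at this
          exact hbj this.symm
        · have a1 : gridAdj 2 ℓ (Function.update y k (b k)) y := by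
            refine adj_iff.2 ⟨k, ?_, fun t ht => by rw [Function.update_of_ne ht]⟩
            rw [Function.update_self, hy k hk]
            exact hbk
          have a2 : gridAdj 2 ℓ (Function.update y k (b k)) b := by
            refine adj_iff.2 ⟨j, ?_, fun t ht => ?_⟩
            · rw [Function.update_of_ne hjk, hy j hj]
              exact fun h => hbj h.symm
            · by_cases htk : t = k
              · subst htk; rw [Function.update_self]
              · rw [Function.update_of_ne htk]
                exact hyb t ht htk
          refine mem_closure_of_two a1 a2 (hK hy) hbCl ?_
          intro hcon
          have := congrFun hcon k
          rw [hy k hk] at this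
          exact hbk this.symm
  have stepA' : ∀ y, y ∈ Kset I c →
      Function.update y j (b j) ∈ Cl ∧ Function.update y k (b k) ∈ Cl :=
    fun y hy => stepA _ y hy le_rfl
  -- Step B
  have stepB : ∀ y, y ∈ Kset I c →
      Function.update (Function.update y j (b j)) k (b k) ∈ Cl := by
    intro y hy
    obtain ⟨mj, mk⟩ := stepA' y hy
    have a1 : gridAdj 2 ℓ (Function.update (Function.update y j (b j)) k (b k))
        (Function.update y j (b j)) := by
      refine adj_iff.2 ⟨k, ?_, fun t ht => by rw [Function.update_of_ne ht]⟩
      rw [Function.update_self, Function.update_of_ne (Ne.symm hjk), hy k hk]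
      exact fun h => hbk h
    have a2 : gridAdj 2 ℓ (Function.update (Function.update y j (b j)) k (b k))
        (Function.update y k (b k)) := by
      refine adj_iff.2 ⟨j, ?_, fun t ht => ?_⟩
      · rw [Function.update_of_ne hjk, Function.update_self,
          Function.update_of_ne hjk, hy j hj]
        exact hbj
      · by_cases htk : t = k
        · subst htk; rw [Function.update_self, Function.update_self]
        · rw [Function.update_of_ne htk, Function.update_of_ne htk,
            Function.update_of_ne ht]
    refine mem_closure_of_two a1 a2 mj mk ?_
    intro hcon
    have := congrFun hcon j
    rw [Function.update_self, Function.update_of_ne hjk] at this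
    exact hbj (this.trans (hy j hj))
  -- Step C : covering
  intro x hx
  have hxI : ∀ i ∈ I, i ≠ j → i ≠ k → x i = c i := by
    intro i hi h1 h2
    exact hx i ⟨hi, by simp [h1, h2]⟩
  set y := Function.update (Function.update x j (c j)) k (c k) with hydef
  have hyK : y ∈ Kset I c := by
    intro i hi
    by_cases hik : i = k
    · subst hik; rw [hydef, Function.update_self]
    · by_cases hij : i = j
      · subst hij; rw [hydef, Function.update_of_ne hjk, Function.update_self]
      · rw [hydef, Function.update_of_ne hik, Function.update_of_ne hij]
        exact hxI i hi hij hik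
  by_cases hxj : x j = c j <;> by_cases hxk : x k = c k
  · have : x = y := by
      funext t
      by_cases htk : t = k
      · subst htk; rw [hydef, Function.update_self, hxk]
      · by_cases htj : t = j
        · subst htj; rw [hydef, Function.update_of_ne hjk, Function.update_self, hxj]
        · rw [hydef, Function.update_of_ne htk, Function.update_of_ne htj]
    rw [this]; exact hK hyK
  · have hxk' : x k = b k := fin2_eq_of_ne hxk hbk
    have : x = Function.update y k (b k) := by
      funext t
      by_cases htk : t = k
      · subst htk; rw [Function.update_self, hxk']
      · rw [Function.update_of_ne htk, hydef, Function.update_of_ne htk]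
        by_cases htj : t = j
        · subst htj; rw [Function.update_self, hxj]
        · rw [Function.update_of_ne htj]
    rw [this]; exact (stepA' y hyK).2
  · have hxj' : x j = b j := fin2_eq_of_ne hxj hbj
    have : x = Function.update y j (b j) := by
      funext t
      by_cases htj : t = j
      · subst htj; rw [Function.update_self, hxj']
      · rw [Function.update_of_ne htj, hydef]
        by_cases htk : t = k
        · subst htk; rw [Function.update_self, hxk]
        · rw [Function.update_of_ne htk, Function.update_of_ne htj]
    rw [this]; exact (stepA' y hyK).1
  · have hxj' : x j = b j := fin2_eq_of_ne hxj hbj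
    have hxk' : x k = b k := fin2_eq_of_ne hxk hbk
    have : x = Function.update (Function.update y j (b j)) k (b k) := by
      funext t
      by_cases htk : t = k
      · subst htk; rw [Function.update_self, hxk']
      · rw [Function.update_of_ne htk]
        by_cases htj : t = j
        · subst htj; rw [Function.update_self, hxj']
        · rw [Function.update_of_ne htj, hydef, Function.update_of_ne htk,
            Function.update_of_ne htj]
    rw [this]; exact stepB y hyK
end Grow
end BP13
namespace BP13
open Set Function

section Face
variable {ℓ : ℕ}

def flip2 (a : Fin 2) : Fin 2 := if a = 0 then 1 else 0
lemma flip2_ne (a : Fin 2) : flip2 a ≠ a := by revert a; decide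
lemma eq_flip2_of_ne {a b : Fin 2} (h : b ≠ a) : b = flip2 a := by revert a b; decide

lemma fin2_bounds (x : Fin 2) : 0 ≤ x ∧ x ≤ 1 := by revert x; decide

lemma exists_third (hℓ : 3 ≤ ℓ) (j k : Fin ℓ) : ∃ t : Fin ℓ, t ≠ j ∧ t ≠ k := by
  by_contra h
  push_neg at h
  have hsub : (Finset.univ : Finset (Fin ℓ)) ⊆ {j, k} := by
    intro t _
    by_cases htj : t = j
    · simp [htj]
    · simp [h t htj]
  have h1 := Finset.card_le_card hsub
  have h2 : ({j, k} : Finset (Fin ℓ)).card ≤ 2 :=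
    (Finset.card_insert_le _ _).trans (by simp)
  rw [Finset.card_univ, Fintype.card_fin] at h1
  omega

/-- The codimension-2 face of the hypercube with coordinates `j`, `k`
fixed to `a`, `b`. -/
def face (j k : Fin ℓ) (a b : Fin 2) : Set (Fin ℓ → Fin 2) := {x | x j = a ∧ x k = b}

def basept (j k : Fin ℓ) (a b : Fin 2) : Fin ℓ → Fin 2 :=
  fun i => if i = j then a else if i = k then b else 0

lemma basept_mem {j k : Fin ℓ} (hjk : j ≠ k) (a b : Fin 2) :
    basept j k a b ∈ face j k a b := by
  constructor
  · simp [basept]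
  · simp [basept, Ne.symm hjk]

lemma face_isCube {j k : Fin ℓ} (hjk : j ≠ k) (a b : Fin 2) : IsCube (face j k a b) := by
  classical
  refine ⟨(fun i => if i = j then a else if i = k then b else 0),
         (fun i => if i = j then a else if i = k then b else 1), fun i => ?_, ?_⟩
  · by_cases h1 : i = j
    · simp [h1]
    · by_cases h2 : i = k <;> simp [h1, h2] <;> decide
  · ext x
    simp only [face, Set.mem_setOf_eq]
    constructor
    · rintro ⟨hx1, hx2⟩ i
      by_cases h1 : i = j
      · subst h1; simp [hx1, Ne.symm hjk]
      · by_cases h2 : i = k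
        · subst h2; simp [hx2, h1]
        · simp [h1, h2]
          exact (fin2_bounds (x i)).2
    · intro hx
      constructor
      · have := hx j; simp at this; exact le_antisymm this.2 this.1
      · have := hx k; simp [Ne.symm hjk] at this; exact le_antisymm this.2 this.1

lemma face_constOn {j k : Fin ℓ} (a b : Fin 2) : ConstOn {j, k} (face j k a b) := by
  intro i hi x hx y hy
  rcases hi with hi | hi
  · subst hi; rw [hx.1, hy.1]
  · simp only [Set.mem_singleton_iff] at hi; subst hi; rw [hx.2, hy.2]

lemma maxConst_iff {j k : Fin ℓ} (hjk : j ≠ k) (C : Set (Fin ℓ → Fin 2)) :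
    MaxConstSubcube 2 ℓ Set.univ {j, k} C ↔ ∃ a b : Fin 2, C = face j k a b := by
  constructor
  · rintro ⟨hcube, hsub, hconst, hmax⟩
    obtain ⟨lo, hi, hle, hC⟩ := hcube
    have hlo : lo ∈ C := by rw [hC]; exact fun i => ⟨le_refl _, hle i⟩
    refine ⟨lo j, lo k, ?_⟩
    have hCf : C ⊆ face j k (lo j) (lo k) := by
      intro x hx
      exact ⟨hconst j (by simp) x hx lo hlo, hconst k (by simp) x hx lo hlo⟩
    exact (hmax (face j k (lo j) (lo k)) (face_isCube hjk _ _) (Set.subset_univ _)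
      (face_constOn _ _) hCf).symm
  · rintro ⟨a, b, rfl⟩
    refine ⟨face_isCube hjk a b, Set.subset_univ _, face_constOn a b, ?_⟩
    intro C' hC'cube hC'sub hC'const hCC'
    apply le_antisymm
    · intro x hx
      have hpt := basept_mem hjk a b
      exact ⟨(hC'const j (by simp) x hx _ (hCC' hpt)).trans hpt.1,
             (hC'const k (by simp) x hx _ (hCC' hpt)).trans hpt.2⟩
    · exact hCC'

lemma face_eq_Kset {j k : Fin ℓ} (hjk : j ≠ k) {c : Fin ℓ → Fin 2} {a b : Fin 2}
    (hcj : c j = a) (hck : c k = b) : face j k a b = Kset {j, k} c := by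
  ext x
  simp only [face, Kset, Set.mem_setOf_eq]
  constructor
  · rintro ⟨h1, h2⟩ i hi
    rcases hi with hi | hi
    · subst hi; rw [h1, hcj]
    · simp only [Set.mem_singleton_iff] at hi; subst hi; rw [h2, hck]
  · intro h
    exact ⟨(h j (by simp)).trans hcj, (h k (by simp)).trans hck⟩

lemma face_not_subsingleton (hℓ : 3 ≤ ℓ) {j k : Fin ℓ} (hjk : j ≠ k) (a b : Fin 2) :
    ¬ (face j k a b).Subsingleton := by
  intro hss
  obtain ⟨t, htj, htk⟩ := exists_third hℓ j k
  have h1 := basept_mem hjk a b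
  have h2 : Function.update (basept j k a b) t 1 ∈ face j k a b := by
    refine ⟨?_, ?_⟩
    · rw [Function.update_of_ne (Ne.symm htj)]; exact h1.1
    · rw [Function.update_of_ne (Ne.symm htk)]; exact h1.2
  have := hss h2 h1
  have ht := congrFun this t
  rw [Function.update_self] at ht
  simp [basept, htj, htk] at ht

lemma Kset_ne_univ (i : Fin ℓ) (c : Fin ℓ → Fin 2) : Kset {i} c ≠ Set.univ := by
  intro h
  have hmem : Function.update c i (flip2 (c i)) ∈ Kset {i} c := by rw [h]; trivial
  have := hmem i rfl
  rw [Function.update_self] at this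
  exact flip2_ne _ this

end Face
end BP13
namespace BP13
open Set Function

section ZeroCase
variable {ℓ : ℕ}

lemma finalPair_comm {A Q : Set (Fin ℓ → Fin 2)} {j k : Fin ℓ}
    (h : FinalPair 2 ℓ A Q j k) : FinalPair 2 ℓ A Q k j := by
  obtain ⟨h1, C, hC, h3, h4⟩ := h
  refine ⟨h1, C, ?_, h3, h4⟩
  rwa [Set.pair_comm k j]

lemma core_zero (hℓ : 3 ≤ ℓ) {i₀ t₁ t₂ : Fin ℓ} (h1 : i₀ ≠ t₁) (h2 : i₀ ≠ t₂)
    (h12 : t₁ ≠ t₂) {A : Set (Fin ℓ → Fin 2)} (hA1 : FinalPair 2 ℓ A Set.univ i₀ t₁)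
    (hA2 : FinalPair 2 ℓ A Set.univ i₀ t₂) : False := by
  obtain ⟨hspan, C₁, hmax1, hint1, hcard1⟩ := hA1
  obtain ⟨-, C₂, hmax2, hint2, hcard2⟩ := hA2
  rw [maxConst_iff h1] at hmax1
  rw [maxConst_iff h2] at hmax2
  obtain ⟨a₁, b₁, rfl⟩ := hmax1
  obtain ⟨a₂, b₂, rfl⟩ := hmax2
  obtain ⟨x₁, hx₁⟩ := Set.ncard_eq_one.1 hcard1
  obtain ⟨x₂, hx₂⟩ := Set.ncard_eq_one.1 hcard2
  unfold IntSpans at hspan hint1 hint2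
  rw [Set.inter_univ] at hspan
  have hx₁A : x₁ ∈ A \ face i₀ t₁ a₁ b₁ := by rw [hx₁]; rfl
  have hx₂A : x₂ ∈ A \ face i₀ t₂ a₂ b₂ := by rw [hx₂]; rfl
  by_cases va : a₁ = a₂
  · subst va
    have hx1i : x₁ i₀ = a₁ := by
      by_contra hcon
      have hx1C2 : x₁ ∉ face i₀ t₂ a₁ b₂ := fun hmem => hcon hmem.1
      have hsub : A ∩ face i₀ t₂ a₁ b₂ ⊆ Kset {t₁} (fun _ => b₁) := by
        rintro y ⟨hyA, hyC2⟩
        have hy1 : y ∈ face i₀ t₁ a₁ b₁ := by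
          by_contra hy1
          have hmem : y ∈ A \ face i₀ t₁ a₁ b₁ := ⟨hyA, hy1⟩
          rw [hx₁] at hmem
          simp only [Set.mem_singleton_iff] at hmem
          subst hmem
          exact hx1C2 hyC2
        intro s hs
        simp only [Set.mem_singleton_iff] at hs
        rw [hs]
        exact hy1.2
      have hC2sub : face i₀ t₂ a₁ b₂ ⊆ Kset {t₁} (fun _ => b₁) := by
        rw [← hint2]
        exact closure_subset_Kset hsub
      have hw : Function.update (basept i₀ t₂ a₁ b₂) t₁ (flip2 b₁)
          ∈ face i₀ t₂ a₁ b₂ := by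
        constructor
        · rw [Function.update_of_ne h1]
          exact (basept_mem h2 a₁ b₂).1
        · rw [Function.update_of_ne (Ne.symm h12)]
          exact (basept_mem h2 a₁ b₂).2
      have := hC2sub hw t₁ rfl
      rw [Function.update_self] at this
      exact flip2_ne b₁ this
    have hAK : A ⊆ Kset {i₀} (fun _ => a₁) := by
      intro y hyA s hs
      simp only [Set.mem_singleton_iff] at hs
      rw [hs]
      show y i₀ = a₁
      by_cases hy1 : y ∈ face i₀ t₁ a₁ b₁
      · exact hy1.1
      · have hmem : y ∈ A \ face i₀ t₁ a₁ b₁ := ⟨hyA, hy1⟩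
        rw [hx₁] at hmem
        simp only [Set.mem_singleton_iff] at hmem
        subst hmem
        exact hx1i
    have huniv : (Set.univ : Set (Fin ℓ → Fin 2)) ⊆ Kset {i₀} (fun _ => a₁) := by
      rw [← hspan]
      exact closure_subset_Kset hAK
    exact Kset_ne_univ i₀ (fun _ => a₁) (Set.eq_univ_of_univ_subset huniv)
  · have hsub : A ∩ face i₀ t₁ a₁ b₁ ⊆ {x₂} := by
      rintro y ⟨hyA, hyC1⟩
      have hy2 : y ∉ face i₀ t₂ a₂ b₂ := fun hm => va (hyC1.1.symm.trans hm.1)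
      have hmem : y ∈ A \ face i₀ t₂ a₂ b₂ := ⟨hyA, hy2⟩
      rwa [hx₂] at hmem
    have hss : (A ∩ face i₀ t₁ a₁ b₁).Subsingleton :=
      Set.subsingleton_singleton.anti hsub
    have e1 : bootClosure (gridAdj 2 ℓ) 2 (A ∩ face i₀ t₁ a₁ b₁)
        = A ∩ face i₀ t₁ a₁ b₁ := closure_subsingleton hss
    have e2 : face i₀ t₁ a₁ b₁ = A ∩ face i₀ t₁ a₁ b₁ := hint1.symm.trans e1
    exact face_not_subsingleton hℓ h1 a₁ b₁ (e2 ▸ hss)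

lemma zero_case (hℓ : 3 ≤ ℓ) {j₁ k₁ j₂ k₂ : Fin ℓ} (hjk1 : j₁ ≠ k₁) (hjk2 : j₂ ≠ k₂)
    (hpair : ({j₁, k₁} : Finset (Fin ℓ)) ≠ {j₂, k₂})
    (hshare : j₁ = j₂ ∨ j₁ = k₂ ∨ k₁ = j₂ ∨ k₁ = k₂)
    {A : Set (Fin ℓ → Fin 2)} (hA1 : FinalPair 2 ℓ A Set.univ j₁ k₁)
    (hA2 : FinalPair 2 ℓ A Set.univ j₂ k₂) : False := by
  -- normalise so that the shared coordinate comes first in both pairs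
  have main : ∀ i₀ t₁ t₂ : Fin ℓ, i₀ ≠ t₁ → i₀ ≠ t₂ →
      ({i₀, t₁} : Finset (Fin ℓ)) = {j₁, k₁} → ({i₀, t₂} : Finset (Fin ℓ)) = {j₂, k₂} →
      FinalPair 2 ℓ A Set.univ i₀ t₁ → FinalPair 2 ℓ A Set.univ i₀ t₂ → False := by
    intro i₀ t₁ t₂ h1 h2 hp1 hp2 f1 f2
    have h12 : t₁ ≠ t₂ := by
      rintro rfl
      exact hpair (hp1.symm.trans hp2)
    exact core_zero hℓ h1 h2 h12 f1 f2
  rcases hshare with h | h | h | h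
  · exact main j₁ k₁ k₂ hjk1 (by rw [h]; exact hjk2) rfl (by rw [h]) hA1
      (by rw [h]; exact hA2)
  · exact main j₁ k₁ j₂ hjk1 (by rw [h]; exact Ne.symm hjk2) rfl
      (by rw [h]; exact Finset.pair_comm k₂ j₂) hA1 (by rw [h]; exact finalPair_comm hA2)
  · exact main k₁ j₁ k₂ (Ne.symm hjk1) (by rw [h]; exact hjk2)
      (Finset.pair_comm k₁ j₁) (by rw [h]) (finalPair_comm hA1) (by rw [h]; exact hA2)
  · exact main k₁ j₁ j₂ (Ne.symm hjk1) (by rw [h]; exact Ne.symm hjk2)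
      (Finset.pair_comm k₁ j₁) (by rw [h]; exact Finset.pair_comm k₂ j₂)
      (finalPair_comm hA1) (by rw [h]; exact finalPair_comm hA2)

end ZeroCase
end BP13
namespace BP13
open Set Function

section Emb
variable {ℓ n : ℕ} {F : Finset (Fin ℓ)} {c : Fin ℓ → Fin 2} {φ : Fin n ≃ {i // i ∈ F}}

/-- Embedding of the small cube `[2]^n` onto the subcube of `[2]^ℓ` which is free
exactly on the coordinates of `F` and follows the pattern `c` elsewhere. -/
noncomputable def embF (F : Finset (Fin ℓ)) (c : Fin ℓ → Fin 2) (φ : Fin n ≃ {i // i ∈ F})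
    (y : Fin n → Fin 2) : Fin ℓ → Fin 2 :=
  fun i => if h : i ∈ F then y (φ.symm ⟨i, h⟩) else c i

/-- The subcube of `[2]^ℓ` fixed to the pattern `c` outside `F`. -/
def Dset (F : Finset (Fin ℓ)) (c : Fin ℓ → Fin 2) : Set (Fin ℓ → Fin 2) :=
  Kset {i | i ∉ F} c

lemma embF_apply_mem (y : Fin n → Fin 2) {i : Fin ℓ} (h : i ∈ F) :
    embF F c φ y i = y (φ.symm ⟨i, h⟩) := dif_pos h

lemma embF_apply_notmem (y : Fin n → Fin 2) {i : Fin ℓ} (h : i ∉ F) :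
    embF F c φ y i = c i := dif_neg h

lemma embF_apply_phi (y : Fin n → Fin 2) (t : Fin n) :
    embF F c φ y ((φ t : {i // i ∈ F}) : Fin ℓ) = y t := by
  rw [embF_apply_mem y (φ t).2]
  congr 1
  simp

lemma embF_mem_Dset (y : Fin n → Fin 2) : embF F c φ y ∈ Dset F c :=
  fun i hi => embF_apply_notmem y hi

lemma embF_injective : Function.Injective (embF F c φ) := by
  intro y₁ y₂ h
  funext t
  have := congrFun h ((φ t : {i // i ∈ F}) : Fin ℓ)
  rwa [embF_apply_phi, embF_apply_phi] at this

lemma embF_surj_on {x : Fin ℓ → Fin 2} (hx : x ∈ Dset F c) :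
    embF F c φ (fun t => x ((φ t : {i // i ∈ F}) : Fin ℓ)) = x := by
  funext i
  by_cases h : i ∈ F
  · rw [embF_apply_mem _ h]
    congr 1
    have : ((φ (φ.symm ⟨i, h⟩) : {i // i ∈ F}) : Fin ℓ) = i := by simp
    rw [this]
  · rw [embF_apply_notmem _ h]
    exact (hx i h).symm

lemma embF_adj_iff {y₁ y₂ : Fin n → Fin 2} :
    gridAdj 2 ℓ (embF F c φ y₁) (embF F c φ y₂) ↔ gridAdj 2 n y₁ y₂ := by
  rw [adj_iff, adj_iff]
  constructor
  · rintro ⟨i, hi, he⟩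
    have hiF : i ∈ F := by
      by_contra hiF
      rw [embF_apply_notmem _ hiF, embF_apply_notmem _ hiF] at hi
      exact hi rfl
    refine ⟨φ.symm ⟨i, hiF⟩, ?_, ?_⟩
    · rwa [embF_apply_mem _ hiF, embF_apply_mem _ hiF] at hi
    · intro t ht
      have hne : ((φ t : {i // i ∈ F}) : Fin ℓ) ≠ i := by
        intro hcon
        apply ht
        have h2 : (⟨i, hiF⟩ : {i // i ∈ F}) = φ t := Subtype.ext hcon.symm
        rw [h2, Equiv.symm_apply_apply]
      have := he _ hne
      rwa [embF_apply_phi, embF_apply_phi] at this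
  · rintro ⟨t, ht, he⟩
    refine ⟨(φ t : {i // i ∈ F}), by rwa [embF_apply_phi, embF_apply_phi], ?_⟩
    intro i hi
    by_cases hiF : i ∈ F
    · rw [embF_apply_mem _ hiF, embF_apply_mem _ hiF]
      refine he _ ?_
      intro hcon
      apply hi
      rw [← hcon, Equiv.apply_symm_apply]
    · rw [embF_apply_notmem _ hiF, embF_apply_notmem _ hiF]

lemma embF_step (X : Set (Fin n → Fin 2)) :
    bootStep (gridAdj 2 ℓ) 2 (embF F c φ '' X) = embF F c φ '' bootStep (gridAdj 2 n) 2 X := by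
  apply le_antisymm
  · intro v hv
    by_cases hvX : v ∈ embF F c φ '' X
    · exact (Set.image_mono (bootStep_subset _ X)) hvX
    · obtain ⟨u₁, u₂, a1, a2, m1, m2, hne⟩ := two_of_mem_bootStep hv hvX
      have hu₁D : u₁ ∈ Dset F c := by
        obtain ⟨y, _, rfl⟩ := m1; exact embF_mem_Dset y
      have hu₂D : u₂ ∈ Dset F c := by
        obtain ⟨y, _, rfl⟩ := m2; exact embF_mem_Dset y
      have hvD : v ∈ Dset F c := Kset_closed _ c v u₁ u₂ a1 a2 hu₁D hu₂D hne
      obtain ⟨y₁, hy₁, rfl⟩ := m1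
      obtain ⟨y₂, hy₂, rfl⟩ := m2
      set yv := fun t => v ((φ t : {i // i ∈ F}) : Fin ℓ) with hyv
      have hv' : embF F c φ yv = v := embF_surj_on hvD
      refine ⟨yv, ?_, hv'⟩
      rw [← hv'] at a1 a2
      exact mem_bootStep_of_two (embF_adj_iff.1 a1) (embF_adj_iff.1 a2) hy₁ hy₂
        (fun h => hne (congrArg _ h))
  · rintro v ⟨y, hy, rfl⟩
    by_cases hyX : y ∈ X
    · exact bootStep_subset _ _ ⟨y, hyX, rfl⟩
    · obtain ⟨u₁, u₂, a1, a2, m1, m2, hne⟩ := two_of_mem_bootStep hy hyX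
      exact mem_bootStep_of_two (embF_adj_iff.2 a1) (embF_adj_iff.2 a2)
        ⟨u₁, m1, rfl⟩ ⟨u₂, m2, rfl⟩ (fun h => hne (embF_injective h))

lemma embF_closure (X : Set (Fin n → Fin 2)) :
    bootClosure (gridAdj 2 ℓ) 2 (embF F c φ '' X)
      = embF F c φ '' bootClosure (gridAdj 2 n) 2 X := by
  unfold bootClosure
  rw [Set.image_iUnion]
  apply Set.iUnion_congr
  intro t
  induction t with
  | zero => simp
  | succ t ih =>
    rw [Function.iterate_succ_apply', Function.iterate_succ_apply', ih, embF_step]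

lemma embF_range : embF F c φ '' Set.univ = Dset F c := by
  apply le_antisymm
  · rintro v ⟨y, -, rfl⟩
    exact embF_mem_Dset y
  · intro x hx
    exact ⟨_, trivial, embF_surj_on hx⟩

lemma embF_spans_iff (X : Set (Fin n → Fin 2)) :
    bootClosure (gridAdj 2 ℓ) 2 (embF F c φ '' X) = Dset F c
      ↔ bootClosure (gridAdj 2 n) 2 X = Set.univ := by
  rw [embF_closure, ← embF_range]
  constructor
  · intro h
    apply le_antisymm (Set.subset_univ _)
    intro y _
    have : embF F c φ y ∈ embF F c φ '' Set.univ := ⟨y, trivial, rfl⟩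
    rw [← h] at this
    obtain ⟨y', hy', he⟩ := this
    rwa [← embF_injective he]
  · intro h; rw [h]

end Emb
end BP13
namespace BP13
open Set Function

section Pattern
variable {ℓ m n : ℕ}

/-- Pattern determined by the pair values. -/
noncomputable def patt (j k : Fin m → Fin ℓ) (e1 e2 : Fin m → Fin 2) : Fin ℓ → Fin 2 :=
  fun i => if h : ∃ q, j q = i then e1 h.choose
    else if h' : ∃ q, k q = i then e2 h'.choose else 0

/-- The free (non-pair) coordinates. -/
noncomputable def freeF (j k : Fin m → Fin ℓ) : Finset (Fin ℓ) :=
  letI := Classical.decEq (Fin ℓ)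
  letI : DecidablePred fun i => (∀ q, j q ≠ i) ∧ (∀ q, k q ≠ i) := fun _ => Classical.dec _
  Finset.univ.filter fun i => (∀ q, j q ≠ i) ∧ (∀ q, k q ≠ i)

variable {j k : Fin m → Fin ℓ} {e1 e2 : Fin m → Fin 2}

lemma mem_freeF_iff {i : Fin ℓ} : i ∈ freeF j k ↔ (∀ q, j q ≠ i) ∧ (∀ q, k q ≠ i) := by
  simp [freeF]

lemma j_notmem_freeF (q : Fin m) : j q ∉ freeF j k := by
  rw [mem_freeF_iff]
  rintro ⟨h, -⟩
  exact h q rfl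

lemma k_notmem_freeF (q : Fin m) : k q ∉ freeF j k := by
  rw [mem_freeF_iff]
  rintro ⟨-, h⟩
  exact h q rfl

lemma patt_j (hj : Function.Injective j) (hdisj : ∀ q q', j q ≠ k q') (q : Fin m) :
    patt j k e1 e2 (j q) = e1 q := by
  have h : ∃ q', j q' = j q := ⟨q, rfl⟩
  rw [patt, dif_pos h]
  exact congrArg e1 (hj h.choose_spec)

lemma patt_k (hk : Function.Injective k) (hdisj : ∀ q q', j q ≠ k q') (q : Fin m) :
    patt j k e1 e2 (k q) = e2 q := by
  have h0 : ¬ ∃ q', j q' = k q := by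
    rintro ⟨q', hq'⟩
    exact hdisj q' q hq'
  have h : ∃ q', k q' = k q := ⟨q, rfl⟩
  rw [patt, dif_neg h0, dif_pos h]
  exact congrArg e2 (hk h.choose_spec)

lemma freeF_card (hj : Function.Injective j) (hk : Function.Injective k)
    (hdisj : ∀ q q', j q ≠ k q') : (freeF j k).card = ℓ - 2 * m := by
  classical
  have hcompl : freeF j k = (Finset.image j Finset.univ ∪ Finset.image k Finset.univ)ᶜ := by
    ext i
    rw [mem_freeF_iff, Finset.mem_compl, Finset.mem_union]
    simp only [Finset.mem_image, Finset.mem_univ, true_and, not_or, not_exists]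
    try tauto
  have hdisj' : Disjoint (Finset.image j Finset.univ) (Finset.image k Finset.univ) := by
    rw [Finset.disjoint_left]
    rintro i hi hi'
    simp only [Finset.mem_image, Finset.mem_univ, true_and] at hi hi'
    obtain ⟨q, rfl⟩ := hi
    obtain ⟨q', hq'⟩ := hi'
    exact hdisj q q' hq'.symm
  rw [hcompl, Finset.card_compl, Finset.card_union_of_disjoint hdisj',
    Finset.card_image_of_injective _ hj, Finset.card_image_of_injective _ hk,
    Finset.card_univ, Fintype.card_fin, Fintype.card_fin]
  omega

variable {φ : Fin n ≃ {i // i ∈ freeF j k}}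

/-- The extra vertex for the pair `q`: flipped in both coordinates of the pair,
following the pattern on the other pair coordinates, free values `g q`. -/
noncomputable def avtx (j k : Fin m → Fin ℓ) (e1 e2 : Fin m → Fin 2)
    (φ : Fin n ≃ {i // i ∈ freeF j k}) (g : Fin m → Fin n → Fin 2) (q : Fin m) :
    Fin ℓ → Fin 2 :=
  Function.update (Function.update
    (embF (freeF j k) (patt j k e1 e2) φ (g q)) (j q) (flip2 (e1 q))) (k q) (flip2 (e2 q))

variable {g : Fin m → Fin n → Fin 2}

lemma avtx_j (hdisj : ∀ q q', j q ≠ k q') (q : Fin m) :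
    avtx j k e1 e2 φ g q (j q) = flip2 (e1 q) := by
  rw [avtx, Function.update_of_ne (hdisj q q), Function.update_self]

lemma avtx_k (q : Fin m) : avtx j k e1 e2 φ g q (k q) = flip2 (e2 q) := by
  rw [avtx, Function.update_self]

lemma avtx_other {q : Fin m} {i : Fin ℓ} (h1 : i ≠ j q) (h2 : i ≠ k q) :
    avtx j k e1 e2 φ g q i = embF (freeF j k) (patt j k e1 e2) φ (g q) i := by
  rw [avtx, Function.update_of_ne h2, Function.update_of_ne h1]

lemma avtx_pattern {q : Fin m} {i : Fin ℓ} (hF : i ∉ freeF j k)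
    (h1 : i ≠ j q) (h2 : i ≠ k q) :
    avtx j k e1 e2 φ g q i = patt j k e1 e2 i := by
  rw [avtx_other h1 h2, embF_apply_notmem _ hF]

lemma avtx_mem_face (hj : Function.Injective j) (hk : Function.Injective k)
    (hdisj : ∀ q q', j q ≠ k q') {q q' : Fin m} (hqq' : q' ≠ q) :
    avtx j k e1 e2 φ g q ∈ face (j q') (k q') (e1 q') (e2 q') := by
  constructor
  · rw [avtx_pattern (j_notmem_freeF q') (fun h => hqq' (hj h)) (hdisj q' q)]
    exact patt_j hj hdisj q'
  · rw [avtx_pattern (k_notmem_freeF q') (fun h => hdisj q q' h.symm) (fun h => hqq' (hk h))]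
    exact patt_k hk hdisj q'

lemma avtx_notmem_face (hdisj : ∀ q q', j q ≠ k q') (q : Fin m) :
    avtx j k e1 e2 φ g q ∉ face (j q) (k q) (e1 q) (e2 q) := by
  rintro ⟨h1, -⟩
  rw [avtx_j hdisj] at h1
  exact flip2_ne _ h1

lemma avtx_notmem_Dset (hj : Function.Injective j) (hdisj : ∀ q q', j q ≠ k q')
    (q : Fin m) : avtx j k e1 e2 φ g q ∉ Dset (freeF j k) (patt j k e1 e2) := by
  intro h
  have hh := h (j q) (j_notmem_freeF q)
  rw [avtx_j hdisj, patt_j hj hdisj] at hh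
  exact flip2_ne _ hh

end Pattern
end BP13
namespace BP13
open Set Function

section Back
variable {ℓ m : ℕ}

lemma notmem_freeF_iff {m : ℕ} {j k : Fin m → Fin ℓ} {i : Fin ℓ}
    (hi : i ∉ freeF j k) : ∃ q, j q = i ∨ k q = i := by
  rw [mem_freeF_iff] at hi
  by_cases hP : ∃ q, j q = i
  · obtain ⟨q, hq⟩ := hP; exact ⟨q, Or.inl hq⟩
  · push_neg at hP
    have h2 : ¬ ∀ q, k q ≠ i := fun h => hi ⟨hP, h⟩
    push_neg at h2
    obtain ⟨q, hq⟩ := h2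
    exact ⟨q, Or.inr hq⟩

lemma Kset_empty {c : Fin ℓ → Fin 2} : Kset (∅ : Set (Fin ℓ)) c = Set.univ := by
  ext x; simp [Kset]

/-- Backward direction: an admissible configuration realizes all final-pair
events simultaneously. -/
theorem back_event (hm : 1 ≤ m) {F : Finset (Fin ℓ)} {c : Fin ℓ → Fin 2}
    {j k : Fin m → Fin ℓ} (hj : Function.Injective j) (hk : Function.Injective k)
    (hjk : ∀ q q', j q ≠ k q')
    (hjF : ∀ q, j q ∉ F) (hkF : ∀ q, k q ∉ F)
    (hallF : ∀ i, i ∉ F → ∃ q, j q = i ∨ k q = i)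
    {a : Fin m → Fin ℓ → Fin 2}
    (haj : ∀ q, a q (j q) ≠ c (j q)) (hak : ∀ q, a q (k q) ≠ c (k q))
    (hao : ∀ q i, i ∉ F → i ≠ j q → i ≠ k q → a q i = c i)
    {S : Set (Fin ℓ → Fin 2)} (hS : S ⊆ Dset F c)
    (hDspan : bootClosure (gridAdj 2 ℓ) 2 S = Dset F c) (q : Fin m) :
    FinalPair 2 ℓ (S ∪ Set.range a) Set.univ (j q) (k q) ∧
    bootClosure (gridAdj 2 ℓ) 2
      ((S ∪ Set.range a) ∩ face (j q) (k q) (c (j q)) (c (k q)))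
      = face (j q) (k q) (c (j q)) (c (k q)) ∧
    (S ∪ Set.range a) \ face (j q) (k q) (c (j q)) (c (k q)) = {a q} := by
  classical
  have hfaceK : ∀ q', face (j q') (k q') (c (j q')) (c (k q')) = Kset {j q', k q'} c :=
    fun q' => face_eq_Kset (hjk q' q') rfl rfl
  have hmemface : ∀ q₁ q₂ : Fin m, q₁ ≠ q₂ →
      a q₁ ∈ face (j q₂) (k q₂) (c (j q₂)) (c (k q₂)) := by
    intro q₁ q₂ h
    constructor
    · exact hao q₁ (j q₂) (hjF q₂) (fun hh => h (hj hh).symm) (hjk q₂ q₁)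
    · exact hao q₁ (k q₂) (hkF q₂) (fun hh => hjk q₁ q₂ hh.symm) (fun hh => h (hk hh).symm)
  have hnotface : ∀ q', a q' ∉ face (j q') (k q') (c (j q')) (c (k q')) :=
    fun q' hmem => haj q' hmem.1
  have hDface : ∀ q', Dset F c ⊆ face (j q') (k q') (c (j q')) (c (k q')) := by
    intro q'
    rw [hfaceK q']
    intro x hx i hi
    rcases hi with hi | hi
    · subst hi; exact hx _ (hjF q')
    · simp only [Set.mem_singleton_iff] at hi; subst hi; exact hx _ (hkF q')
  set A : Set (Fin ℓ → Fin 2) := S ∪ Set.range a with hAdef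
  -- main growth claim
  have claim : ∀ R : Finset (Fin m),
      Kset ({i | i ∉ F} \ ⋃ q' ∈ R, ({j q', k q'} : Set (Fin ℓ))) c
        ⊆ bootClosure (gridAdj 2 ℓ) 2 (S ∪ a '' ↑R) := by
    intro R
    induction R using Finset.induction_on with
    | empty =>
      have h1 : ({i | i ∉ F} \ ⋃ q' ∈ (∅ : Finset (Fin m)), ({j q', k q'} : Set (Fin ℓ)))
          = {i | i ∉ F} := by simp
      rw [h1]
      simp only [Finset.coe_empty, Set.image_empty, Set.union_empty]
      exact hDspan.ge
    | @insert q' R hq'R ih =>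
      set IR := ({i | i ∉ F} \ ⋃ q'' ∈ R, ({j q'', k q''} : Set (Fin ℓ))) with hIR
      have hjq' : j q' ∈ IR := by
        refine ⟨hjF q', ?_⟩
        simp only [Set.mem_iUnion, not_exists]
        intro q'' hq'' hmem
        rcases hmem with h | h
        · exact hq'R (hj h ▸ hq'')
        · simp only [Set.mem_singleton_iff] at h; exact hjk q' q'' h
      have hkq' : k q' ∈ IR := by
        refine ⟨hkF q', ?_⟩
        simp only [Set.mem_iUnion, not_exists]
        intro q'' hq'' hmem
        rcases hmem with h | h
        · exact hjk q'' q' h.symm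
        · simp only [Set.mem_singleton_iff] at h; exact hq'R (hk h ▸ hq'')
      have hgrow := grow (c := c) hjq' hkq' (hjk q' q') (b := a q')
        (fun i hi h1 h2 => hao q' i hi.1 h1 h2) (haj q') (hak q')
      have hseteq : ({i | i ∉ F} \ ⋃ q'' ∈ insert q' R, ({j q'', k q''} : Set (Fin ℓ)))
          = IR \ {j q', k q'} := by
        rw [hIR]
        ext i
        simp only [Set.mem_diff, Set.mem_iUnion, Set.mem_setOf_eq, not_exists,
          Finset.mem_insert, Set.mem_insert_iff, Set.mem_singleton_iff, not_or]
        constructor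
        · rintro ⟨h1, h2⟩
          exact ⟨⟨h1, fun q'' hq'' => h2 q'' (Or.inr hq'')⟩, h2 q' (Or.inl rfl)⟩
        · rintro ⟨⟨h1, h2⟩, h3⟩
          refine ⟨h1, ?_⟩
          rintro q'' (rfl | hq'')
          · exact h3
          · exact h2 q'' hq''
      rw [hseteq]
      have hXeq : S ∪ a '' ↑(insert q' R) = (S ∪ a '' ↑R) ∪ {a q'} := by
        rw [Finset.coe_insert, Set.image_insert_eq]
        ext x
        simp only [Set.mem_union, Set.mem_insert_iff, Set.mem_singleton_iff]
        tauto
      rw [hXeq]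
      refine hgrow.trans ?_
      refine le_trans ?_ (closure_closure_union (X := S ∪ a '' ↑R) (Y := {a q'}))
      apply bootClosure_mono
      exact Set.union_subset_union ih le_rfl
  -- A ∩ face q
  have hCeq : ∀ q', A ∩ face (j q') (k q') (c (j q')) (c (k q'))
      = S ∪ a '' ↑(Finset.univ.erase q') := by
    intro q'
    ext x
    constructor
    · rintro ⟨hxA, hxf⟩
      rcases hxA with hx | ⟨q'', rfl⟩
      · exact Or.inl hx
      · by_cases hq'' : q'' = q'
        · subst hq''
          exact absurd hxf (hnotface q'')
        · exact Or.inr ⟨q'', by simp [hq''], rfl⟩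
    · rintro (hx | ⟨q'', hq'', rfl⟩)
      · exact ⟨Or.inl hx, hDface q' (hS hx)⟩
      · simp only [Finset.coe_erase, Set.mem_diff, Set.mem_singleton_iff,
          Finset.coe_univ, Set.mem_univ, true_and] at hq''
        exact ⟨Or.inr ⟨q'', rfl⟩, hmemface q'' q' hq''⟩
  have hfaceset : ∀ q', ({i | i ∉ F} \ ⋃ q'' ∈ Finset.univ.erase q', ({j q'', k q''} : Set (Fin ℓ)))
      = ({j q', k q'} : Set (Fin ℓ)) := by
    intro q'
    ext i
    simp only [Set.mem_diff, Set.mem_setOf_eq, Set.mem_iUnion, not_exists,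
      Finset.mem_erase, Set.mem_insert_iff, Set.mem_singleton_iff]
    constructor
    · rintro ⟨h1, h2⟩
      obtain ⟨q₀, hq₀⟩ := hallF i h1
      by_cases hq₀q : q₀ = q'
      · subst hq₀q
        rcases hq₀ with h | h
        · exact Or.inl h.symm
        · exact Or.inr h.symm
      · exact absurd (by rcases hq₀ with h | h <;> simp [h.symm])
          (h2 q₀ ⟨hq₀q, Finset.mem_univ q₀⟩)
    · rintro (rfl | rfl)
      · refine ⟨hjF q', ?_⟩
        rintro q'' ⟨hq''q, -⟩ (h | h)
        · exact hq''q (hj h.symm)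
        · exact hjk q' q'' h
      · refine ⟨hkF q', ?_⟩
        rintro q'' ⟨hq''q, -⟩ (h | h)
        · exact hjk q'' q' h.symm
        · exact hq''q (hk h.symm)
  have hIntC : ∀ q', bootClosure (gridAdj 2 ℓ) 2 (A ∩ face (j q') (k q') (c (j q')) (c (k q')))
      = face (j q') (k q') (c (j q')) (c (k q')) := by
    intro q'
    apply le_antisymm
    · rw [hfaceK q']
      apply closure_subset_Kset
      rw [← hfaceK q']
      exact Set.inter_subset_right
    · rw [hCeq q']
      have h2 := claim (Finset.univ.erase q')
      rw [hfaceset q'] at h2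
      rw [hfaceK q']
      exact h2
  have haA : ∀ q', a q' ∈ A := fun q' => Or.inr ⟨q', rfl⟩
  have hsetm : ∀ q', A \ face (j q') (k q') (c (j q')) (c (k q')) = {a q'} := by
    intro q'
    ext x
    constructor
    · rintro ⟨hxA, hxf⟩
      rcases hxA with hx | ⟨q'', rfl⟩
      · exact absurd (hDface q' (hS hx)) hxf
      · by_cases hq'' : q'' = q'
        · subst hq''; rfl
        · exact absurd (hmemface q'' q' hq'') hxf
    · rintro rfl
      exact ⟨haA q', hnotface q'⟩
  have hcard : ∀ q', (A \ face (j q') (k q') (c (j q')) (c (k q'))).ncard = 1 := by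
    intro q'
    rw [hsetm q', Set.ncard_singleton]
  have hspanA : bootClosure (gridAdj 2 ℓ) 2 (A ∩ Set.univ) = Set.univ := by
    rw [Set.inter_univ]
    apply Set.eq_univ_of_univ_subset
    have hq₀ : (0 : ℕ) < m := hm
    set q₀ : Fin m := ⟨0, hq₀⟩
    have hgrow := grow (I := ({j q₀, k q₀} : Set (Fin ℓ))) (c := c)
      (by simp) (by simp) (hjk q₀ q₀) (b := a q₀)
      (fun i hi h1 h2 => by
        rcases hi with h | h
        · exact absurd h h1
        · simp only [Set.mem_singleton_iff] at h; exact absurd h h2)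
      (haj q₀) (hak q₀)
    rw [Set.diff_self, Kset_empty] at hgrow
    refine hgrow.trans ?_
    have h1 : Kset {j q₀, k q₀} c ∪ {a q₀}
        ⊆ bootClosure (gridAdj 2 ℓ) 2 (A ∩ face (j q₀) (k q₀) (c (j q₀)) (c (k q₀)))
          ∪ {a q₀} := by
      apply Set.union_subset_union _ le_rfl
      rw [hIntC q₀, hfaceK q₀]
    refine (bootClosure_mono h1).trans ?_
    refine (closure_closure_union).trans ?_
    apply bootClosure_mono
    apply Set.union_subset
    · exact Set.inter_subset_left
    · intro x hx
      simp only [Set.mem_singleton_iff] at hx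
      subst hx
      exact haA q₀
  exact ⟨⟨hspanA, face (j q) (k q) (c (j q)) (c (k q)),
    (maxConst_iff (hjk q q) _).2 ⟨c (j q), c (k q), rfl⟩, hIntC q, hcard q⟩,
    hIntC q, hsetm q⟩

end Back
end BP13
namespace BP13
open Set Function

section Forward
variable {ℓ m : ℕ} {j k : Fin m → Fin ℓ}

lemma Kset_union {I I' : Set (Fin ℓ)} {c : Fin ℓ → Fin 2} :
    Kset (I ∪ I') c = Kset I c ∩ Kset I' c := by
  ext x
  simp only [Kset, Set.mem_setOf_eq, Set.mem_inter_iff, Set.mem_union]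
  constructor
  · intro h
    exact ⟨fun i hi => h i (Or.inl hi), fun i hi => h i (Or.inr hi)⟩
  · rintro ⟨h1, h2⟩ i (hi | hi)
    · exact h1 i hi
    · exact h2 i hi

lemma freeF_pairs_erase (hj : Function.Injective j) (hk : Function.Injective k)
    (hjk : ∀ q q', j q ≠ k q') (q : Fin m) :
    ({i | i ∉ freeF j k} \ ⋃ q' ∈ Finset.univ.erase q, ({j q', k q'} : Set (Fin ℓ)))
      = ({j q, k q} : Set (Fin ℓ)) := by
  ext i
  simp only [Set.mem_diff, Set.mem_setOf_eq, Set.mem_iUnion, not_exists,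
    Finset.mem_erase, Set.mem_insert_iff, Set.mem_singleton_iff]
  constructor
  · rintro ⟨h1, h2⟩
    obtain ⟨q₀, hq₀⟩ := notmem_freeF_iff h1
    by_cases hq₀q : q₀ = q
    · subst hq₀q
      rcases hq₀ with h | h
      · exact Or.inl h.symm
      · exact Or.inr h.symm
    · exact absurd (by rcases hq₀ with h | h <;> simp [h.symm])
        (h2 q₀ ⟨hq₀q, Finset.mem_univ q₀⟩)
  · rintro (rfl | rfl)
    · refine ⟨j_notmem_freeF q, ?_⟩
      rintro q'' ⟨hq''q, -⟩ (h | h)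
      · exact hq''q (hj h.symm)
      · exact hjk q q'' h
    · refine ⟨k_notmem_freeF q, ?_⟩
      rintro q'' ⟨hq''q, -⟩ (h | h)
      · exact hjk q'' q h.symm
      · exact hq''q (hk h.symm)

lemma freeF_pairs_erase_step (hj : Function.Injective j) (hk : Function.Injective k)
    (hjk : ∀ q q', j q ≠ k q') {R : Finset (Fin m)} {q₁ : Fin m} (hq₁ : q₁ ∈ R) :
    ({i | i ∉ freeF j k} \ ⋃ q' ∈ R.erase q₁, ({j q', k q'} : Set (Fin ℓ)))
      = ({i | i ∉ freeF j k} \ ⋃ q' ∈ R, ({j q', k q'} : Set (Fin ℓ)))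
          ∪ ({j q₁, k q₁} : Set (Fin ℓ)) := by
  ext i
  simp only [Set.mem_diff, Set.mem_setOf_eq, Set.mem_iUnion, not_exists,
    Finset.mem_erase, Set.mem_union, Set.mem_insert_iff, Set.mem_singleton_iff]
  constructor
  · rintro ⟨h1, h2⟩
    by_cases hp : i = j q₁ ∨ i = k q₁
    · exact Or.inr hp
    · push_neg at hp
      refine Or.inl ⟨h1, ?_⟩
      intro q' hq' hmem
      by_cases hq'q₁ : q' = q₁
      · subst hq'q₁
        rcases hmem with h | h
        · exact hp.1 h
        · exact hp.2 h
      · exact h2 q' ⟨hq'q₁, hq'⟩ hmem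
  · rintro (⟨h1, h2⟩ | h)
    · exact ⟨h1, fun q' hq' => h2 q' hq'.2⟩
    · rcases h with rfl | rfl
      · refine ⟨j_notmem_freeF q₁, ?_⟩
        rintro q' ⟨hq'q₁, -⟩ (h | h)
        · exact hq'q₁ (hj h.symm)
        · exact hjk q₁ q' h
      · refine ⟨k_notmem_freeF q₁, ?_⟩
        rintro q' ⟨hq'q₁, -⟩ (h | h)
        · exact hjk q' q₁ h.symm
        · exact hq'q₁ (hk h.symm)

theorem forward_struct (hℓ : 3 ≤ ℓ) (hm : 1 ≤ m)
    (hj : Function.Injective j) (hk : Function.Injective k) (hjk : ∀ q q', j q ≠ k q')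
    {A : Set (Fin ℓ → Fin 2)} (hA : ∀ q, FinalPair 2 ℓ A Set.univ (j q) (k q)) :
    ∃ (e1 e2 : Fin m → Fin 2) (a : Fin m → Fin ℓ → Fin 2),
      (∀ q, a q (j q) = flip2 (e1 q)) ∧ (∀ q, a q (k q) = flip2 (e2 q)) ∧
      (∀ q i, i ∉ freeF j k → i ≠ j q → i ≠ k q → a q i = patt j k e1 e2 i) ∧
      A = (A ∩ Dset (freeF j k) (patt j k e1 e2)) ∪ Set.range a ∧
      bootClosure (gridAdj 2 ℓ) 2 (A ∩ Dset (freeF j k) (patt j k e1 e2))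
        = Dset (freeF j k) (patt j k e1 e2) ∧
      (∀ q, A \ face (j q) (k q) (e1 q) (e2 q) = {a q}) := by
  classical
  have hjkq : ∀ q, j q ≠ k q := fun q => hjk q q
  choose C hmax hint hcard1 using fun q => (hA q).2
  choose e1 e2 hCface using fun q => (maxConst_iff (hjkq q) (C q)).1 (hmax q)
  have hint' : ∀ q, bootClosure (gridAdj 2 ℓ) 2 (A ∩ face (j q) (k q) (e1 q) (e2 q))
      = face (j q) (k q) (e1 q) (e2 q) := fun q => by rw [← hCface q]; exact hint q
  have hcard' : ∀ q, (A \ face (j q) (k q) (e1 q) (e2 q)).ncard = 1 :=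
    fun q => by rw [← hCface q]; exact hcard1 q
  choose a ha using fun q => Set.ncard_eq_one.1 (hcard' q)
  have haAm : ∀ q, a q ∈ A \ face (j q) (k q) (e1 q) (e2 q) := fun q => by rw [ha q]; rfl
  have haA : ∀ q, a q ∈ A := fun q => (haAm q).1
  have hanotface : ∀ q, a q ∉ face (j q) (k q) (e1 q) (e2 q) := fun q => (haAm q).2
  have hAq : ∀ q y, y ∈ A → y ∉ face (j q) (k q) (e1 q) (e2 q) → y = a q := by
    intro q y hy hyf
    have hmem : y ∈ A \ face (j q) (k q) (e1 q) (e2 q) := ⟨hy, hyf⟩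
    rwa [ha q] at hmem
  have hspan : bootClosure (gridAdj 2 ℓ) 2 A = Set.univ := by
    have h0 := (hA ⟨0, hm⟩).1
    unfold IntSpans at h0
    rwa [Set.inter_univ] at h0
  -- both coordinates of `a q` are flipped
  have haj : ∀ q, a q (j q) ≠ e1 q := by
    intro q hcon
    have hsub : A ⊆ Kset {j q} (fun _ => e1 q) := by
      intro y hy i hi
      simp only [Set.mem_singleton_iff] at hi
      rw [hi]
      show y (j q) = e1 q
      by_cases hyf : y ∈ face (j q) (k q) (e1 q) (e2 q)
      · exact hyf.1
      · rw [hAq q y hy hyf]; exact hcon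
    have h2 := closure_subset_Kset hsub
    rw [hspan] at h2
    exact Kset_ne_univ (j q) _ (Set.eq_univ_of_univ_subset h2)
  have hak : ∀ q, a q (k q) ≠ e2 q := by
    intro q hcon
    have hsub : A ⊆ Kset {k q} (fun _ => e2 q) := by
      intro y hy i hi
      simp only [Set.mem_singleton_iff] at hi
      rw [hi]
      show y (k q) = e2 q
      by_cases hyf : y ∈ face (j q) (k q) (e1 q) (e2 q)
      · exact hyf.2
      · rw [hAq q y hy hyf]; exact hcon
    have h2 := closure_subset_Kset hsub
    rw [hspan] at h2
    exact Kset_ne_univ (k q) _ (Set.eq_univ_of_univ_subset h2)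
  -- `a q` lies in all other faces
  have hmem' : ∀ q q', q ≠ q' → a q ∈ face (j q') (k q') (e1 q') (e2 q') := by
    intro q q' hqq'
    by_contra hnot
    have heq : a q = a q' := hAq q' (a q) (haA q) hnot
    have hsub : A ∩ face (j q) (k q) (e1 q) (e2 q) ⊆ Kset {j q'} (fun _ => e1 q') := by
      rintro y ⟨hyA, hyf⟩ i hi
      simp only [Set.mem_singleton_iff] at hi
      rw [hi]
      show y (j q') = e1 q'
      by_cases hyf' : y ∈ face (j q') (k q') (e1 q') (e2 q')
      · exact hyf'.1
      · have hya : y = a q' := hAq q' y hyA hyf'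
        rw [hya, ← heq] at hyf
        exact absurd hyf (hanotface q)
    have hCsub : face (j q) (k q) (e1 q) (e2 q) ⊆ Kset {j q'} (fun _ => e1 q') := by
      rw [← hint' q]; exact closure_subset_Kset hsub
    have hwmem : Function.update (basept (j q) (k q) (e1 q) (e2 q)) (j q') (flip2 (e1 q'))
        ∈ face (j q) (k q) (e1 q) (e2 q) := by
      constructor
      · rw [Function.update_of_ne (show j q ≠ j q' from fun h => hqq' (hj h))]
        exact (basept_mem (hjkq q) _ _).1
      · rw [Function.update_of_ne (show k q ≠ j q' from fun h => hjk q' q h.symm)]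
        exact (basept_mem (hjkq q) _ _).2
    have h3 := hCsub hwmem (j q') rfl
    rw [Function.update_self] at h3
    exact flip2_ne _ h3
  have hcj : ∀ q, patt j k e1 e2 (j q) = e1 q := patt_j hj hjk
  have hck : ∀ q, patt j k e1 e2 (k q) = e2 q := patt_k hk hjk
  -- a q agrees with the pattern on other pair coordinates
  have hao : ∀ q i, i ∉ freeF j k → i ≠ j q → i ≠ k q → a q i = patt j k e1 e2 i := by
    intro q i hiF h1 h2
    obtain ⟨q', hq'⟩ := notmem_freeF_iff hiF
    have hq'q : q ≠ q' := by
      rintro rfl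
      rcases hq' with h | h
      · exact h1 h.symm
      · exact h2 h.symm
    have hmem := hmem' q q' hq'q
    rcases hq' with rfl | rfl
    · rw [hmem.1, hcj]
    · rw [hmem.2, hck]
  -- membership of non-exceptional points in D
  have hDmem : ∀ y, y ∈ A → (∀ q, y ≠ a q) → y ∈ Dset (freeF j k) (patt j k e1 e2) := by
    intro y hy hne i hiF
    obtain ⟨q, hq⟩ := notmem_freeF_iff hiF
    have hyf : y ∈ face (j q) (k q) (e1 q) (e2 q) := by
      by_contra hyf
      exact hne q (hAq q y hy hyf)
    rcases hq with rfl | rfl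
    · rw [hyf.1, hcj]
    · rw [hyf.2, hck]
  have hDface : ∀ q, Dset (freeF j k) (patt j k e1 e2) ⊆ face (j q) (k q) (e1 q) (e2 q) := by
    intro q x hx
    constructor
    · rw [hx _ (j_notmem_freeF q), hcj]
    · rw [hx _ (k_notmem_freeF q), hck]
  have hdecomp : A = (A ∩ Dset (freeF j k) (patt j k e1 e2)) ∪ Set.range a := by
    ext y
    constructor
    · intro hy
      by_cases hex : ∃ q, a q = y
      · exact Or.inr hex
      · push_neg at hex
        exact Or.inl ⟨hy, hDmem y hy (fun q h => hex q h.symm)⟩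
    · rintro (⟨h, -⟩ | ⟨q, rfl⟩)
      · exact h
      · exact haA q
  -- the span of the interior
  have hSD : A ∩ Dset (freeF j k) (patt j k e1 e2) ⊆ Dset (freeF j k) (patt j k e1 e2) :=
    Set.inter_subset_right
  set S : Set (Fin ℓ → Fin 2) := A ∩ Dset (freeF j k) (patt j k e1 e2) with hSdef
  have hfK : ∀ q, face (j q) (k q) (e1 q) (e2 q) = Kset {j q, k q} (patt j k e1 e2) :=
    fun q => face_eq_Kset (hjkq q) (hcj q) (hck q)
  have hP : ∀ (nn : ℕ) (R : Finset (Fin m)), R.card = nn →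
      Kset ({i | i ∉ freeF j k} \ ⋃ q' ∈ R, ({j q', k q'} : Set (Fin ℓ))) (patt j k e1 e2)
        ⊆ bootClosure (gridAdj 2 ℓ) 2 (S ∪ a '' ↑R) →
      Kset {i | i ∉ freeF j k} (patt j k e1 e2) ⊆ bootClosure (gridAdj 2 ℓ) 2 S := by
    intro nn
    induction nn with
    | zero =>
      intro R hcard hR
      rw [Finset.card_eq_zero] at hcard
      subst hcard
      simpa using hR
    | succ nn ih =>
      intro R hcard hR
      have hRne : R.Nonempty := by
        rw [← Finset.card_pos, hcard]; omega
      obtain ⟨q₁, hq₁⟩ := hRne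
      refine ih (R.erase q₁) (by rw [Finset.card_erase_of_mem hq₁, hcard]; omega) ?_
      -- strip a q₁
      have hZsub : S ∪ a '' ↑(R.erase q₁) ⊆ Kset {j q₁, k q₁} (patt j k e1 e2) := by
        apply Set.union_subset
        · rw [← hfK q₁]
          exact hSD.trans (hDface q₁)
        · rintro x ⟨q', hq', rfl⟩
          simp only [Finset.coe_erase, Set.mem_diff, Set.mem_singleton_iff] at hq'
          rw [← hfK q₁]
          exact hmem' q' q₁ hq'.2
      have hstrip := strip (hjkq q₁) hZsub
        (b := a q₁) (by rw [hcj]; exact haj q₁) (by rw [hck]; exact hak q₁)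
      have hXeq : (S ∪ a '' ↑(R.erase q₁)) ∪ {a q₁} = S ∪ a '' ↑R := by
        ext x
        simp only [Set.mem_union, Set.mem_singleton_iff, Finset.coe_erase,
          Set.mem_image, Set.mem_diff]
        constructor
        · rintro ((h | ⟨q', ⟨hq'1, -⟩, rfl⟩) | rfl)
          · exact Or.inl h
          · exact Or.inr ⟨q', hq'1, rfl⟩
          · exact Or.inr ⟨q₁, hq₁, rfl⟩
        · rintro (h | ⟨q', hq', rfl⟩)
          · exact Or.inl (Or.inl h)
          · by_cases hq'q₁ : q' = q₁
            · subst hq'q₁; exact Or.inr rfl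
            · exact Or.inl (Or.inr ⟨q', ⟨hq', hq'q₁⟩, rfl⟩)
      rw [hXeq] at hstrip
      rw [freeF_pairs_erase_step hj hk hjk hq₁, Kset_union, ← hstrip]
      exact Set.inter_subset_inter hR le_rfl
  -- base case of the downward induction
  have hq₀m : (0 : ℕ) < m := hm
  have hSface : S ∪ a '' ↑(Finset.univ.erase (⟨0, hq₀m⟩ : Fin m))
      = A ∩ face (j ⟨0, hq₀m⟩) (k ⟨0, hq₀m⟩) (e1 ⟨0, hq₀m⟩) (e2 ⟨0, hq₀m⟩) := by
    ext y
    constructor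
    · rintro (⟨hyA, hyD⟩ | ⟨q', hq', rfl⟩)
      · exact ⟨hyA, hDface _ hyD⟩
      · simp only [Finset.coe_erase, Set.mem_diff, Set.mem_singleton_iff,
          Finset.coe_univ, Set.mem_univ, true_and] at hq'
        exact ⟨haA q', hmem' q' _ hq'⟩
    · rintro ⟨hyA, hyf⟩
      by_cases hex : ∃ q', a q' = y
      · obtain ⟨q', rfl⟩ := hex
        have hne : q' ≠ ⟨0, hq₀m⟩ := fun h => hanotface q' (by rw [← h] at hyf; exact hyf)
        exact Or.inr ⟨q', by simp [hne], rfl⟩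
      · push_neg at hex
        exact Or.inl ⟨hyA, hDmem y hyA (fun q h => hex q h.symm)⟩
  have hbase : Kset ({i | i ∉ freeF j k} \ ⋃ q' ∈ Finset.univ.erase (⟨0, hq₀m⟩ : Fin m),
        ({j q', k q'} : Set (Fin ℓ))) (patt j k e1 e2)
      ⊆ bootClosure (gridAdj 2 ℓ) 2 (S ∪ a '' ↑(Finset.univ.erase (⟨0, hq₀m⟩ : Fin m))) := by
    rw [freeF_pairs_erase hj hk hjk, ← hfK, hSface, hint']
  have hDspan : bootClosure (gridAdj 2 ℓ) 2 S = Dset (freeF j k) (patt j k e1 e2) := by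
    apply le_antisymm
    · exact closure_subset_Kset hSD
    · exact hP _ _ rfl hbase
  exact ⟨e1, e2, a, fun q => eq_flip2_of_ne (haj q), fun q => eq_flip2_of_ne (hak q),
    hao, hdecomp, hDspan, ha⟩

end Forward
end BP13
namespace BP13
open Set Function

section Unique
variable {ℓ : ℕ}

lemma face_unique (hℓ : 3 ≤ ℓ) {j k : Fin ℓ} (hjk : j ≠ k) {A : Set (Fin ℓ → Fin 2)}
    {a b a' b' : Fin 2} {x' : Fin ℓ → Fin 2}
    (h1 : bootClosure (gridAdj 2 ℓ) 2 (A ∩ face j k a b) = face j k a b)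
    (hx' : A \ face j k a' b' = {x'}) :
    a = a' ∧ b = b' := by
  have key : (face j k a b ∩ face j k a' b').Nonempty := by
    rw [Set.nonempty_iff_ne_empty]
    intro hdis
    have hsub : A ∩ face j k a b ⊆ {x'} := by
      rintro y ⟨hyA, hyf⟩
      have hy' : y ∉ face j k a' b' := fun hm =>
        Set.eq_empty_iff_forall_notMem.1 hdis y ⟨hyf, hm⟩
      have hmem : y ∈ A \ face j k a' b' := ⟨hyA, hy'⟩
      rwa [hx'] at hmem
    have hss : (A ∩ face j k a b).Subsingleton := Set.subsingleton_singleton.anti hsub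
    have e1 := closure_subsingleton (adj := gridAdj 2 ℓ) hss
    have e2 : face j k a b = A ∩ face j k a b := h1.symm.trans e1
    exact face_not_subsingleton hℓ hjk a b (e2 ▸ hss)
  obtain ⟨y, hy1, hy2⟩ := key
  exact ⟨hy1.1.symm.trans hy2.1, hy1.2.symm.trans hy2.2⟩

end Unique
end BP13
namespace BP13
open Set Function

section Count
variable {ℓ m n : ℕ} {j k : Fin m → Fin ℓ} {φ : Fin n ≃ {i // i ∈ freeF j k}}

/-- Parameter space for the event decomposition. -/
abbrev ParamT (m n : ℕ) :=
  ((Fin m → Fin 2) × (Fin m → Fin 2)) × (Fin m → Fin n → Fin 2) × Finset (Fin n → Fin 2)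

noncomputable def psiMap (j k : Fin m → Fin ℓ) (φ : Fin n ≃ {i // i ∈ freeF j k})
    (p : ParamT m n) : Finset (Fin ℓ → Fin 2) :=
  p.2.2.image (embF (freeF j k) (patt j k p.1.1 p.1.2) φ)
    ∪ Finset.univ.image (avtx j k p.1.1 p.1.2 φ p.2.1)

lemma psi_coe (p : ParamT m n) :
    (↑(psiMap j k φ p) : Set (Fin ℓ → Fin 2))
      = (embF (freeF j k) (patt j k p.1.1 p.1.2) φ '' ↑p.2.2)
          ∪ Set.range (avtx j k p.1.1 p.1.2 φ p.2.1) := by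
  classical
  simp [psiMap, Finset.coe_union, Finset.coe_image, Set.image_univ]

lemma psi_event (hm : 1 ≤ m) (hj : Function.Injective j) (hk : Function.Injective k)
    (hdisj : ∀ q q', j q ≠ k q') {p : ParamT m n}
    (hsp : bootClosure (gridAdj 2 n) 2 (↑p.2.2 : Set (Fin n → Fin 2)) = Set.univ) :
    (∀ q, FinalPair 2 ℓ (↑(psiMap j k φ p)) Set.univ (j q) (k q)) ∧
    (∀ q, bootClosure (gridAdj 2 ℓ) 2 ((↑(psiMap j k φ p) : Set (Fin ℓ → Fin 2))
        ∩ face (j q) (k q) (p.1.1 q) (p.1.2 q)) = face (j q) (k q) (p.1.1 q) (p.1.2 q)) ∧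
    (∀ q, (↑(psiMap j k φ p) : Set (Fin ℓ → Fin 2)) \ face (j q) (k q) (p.1.1 q) (p.1.2 q)
        = {avtx j k p.1.1 p.1.2 φ p.2.1 q}) := by
  obtain ⟨⟨e1, e2⟩, g, T⟩ := p
  have hcj : ∀ q, patt j k e1 e2 (j q) = e1 q := patt_j hj hdisj
  have hck : ∀ q, patt j k e1 e2 (k q) = e2 q := patt_k hk hdisj
  have hres := fun q => back_event (c := patt j k e1 e2) hm hj hk hdisj
    (fun q' => j_notmem_freeF q') (fun q' => k_notmem_freeF q')
    (fun i hi => notmem_freeF_iff hi)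
    (a := avtx j k e1 e2 φ g)
    (fun q' => by rw [avtx_j hdisj, hcj]; exact flip2_ne _)
    (fun q' => by rw [avtx_k, hck]; exact flip2_ne _)
    (fun q' i hi h1 h2 => avtx_pattern hi h1 h2)
    (S := embF (freeF j k) (patt j k e1 e2) φ '' ↑T)
    (by rintro x ⟨y, -, rfl⟩; exact embF_mem_Dset y)
    ((embF_spans_iff _).2 hsp) q
  simp only [hcj, hck] at hres
  rw [show (↑(psiMap j k φ ⟨⟨e1, e2⟩, g, T⟩) : Set (Fin ℓ → Fin 2))
    = (embF (freeF j k) (patt j k e1 e2) φ '' ↑T) ∪ Set.range (avtx j k e1 e2 φ g)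
    from psi_coe _]
  exact ⟨fun q => (hres q).1, fun q => (hres q).2.1, fun q => (hres q).2.2⟩

lemma avtx_injective (hj : Function.Injective j) (hk : Function.Injective k)
    (hdisj : ∀ q q', j q ≠ k q') {e1 e2 : Fin m → Fin 2} {g : Fin m → Fin n → Fin 2} :
    Function.Injective (avtx j k e1 e2 φ g) := by
  intro q q' h
  by_contra hne
  have h1 := congrFun h (j q)
  have h2 : avtx j k e1 e2 φ g q' (j q) = patt j k e1 e2 (j q) :=
    avtx_pattern (j_notmem_freeF q) (fun hh => hne (hj hh)) (hdisj q q')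
  rw [avtx_j hdisj, h2, patt_j hj hdisj] at h1
  exact flip2_ne _ h1

lemma psi_card (hj : Function.Injective j) (hk : Function.Injective k)
    (hdisj : ∀ q q', j q ≠ k q') (p : ParamT m n) :
    (psiMap j k φ p).card = p.2.2.card + m := by
  classical
  obtain ⟨⟨e1, e2⟩, g, T⟩ := p
  have hdis : Disjoint (T.image (embF (freeF j k) (patt j k e1 e2) φ))
      (Finset.univ.image (avtx j k e1 e2 φ g)) := by
    rw [Finset.disjoint_left]
    intro x hx hx'
    simp only [Finset.mem_image, Finset.mem_univ, true_and] at hx hx'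
    obtain ⟨y, -, rfl⟩ := hx
    obtain ⟨q, hq⟩ := hx'
    have h1 := congrFun hq (j q)
    rw [avtx_j hdisj, embF_apply_notmem _ (j_notmem_freeF q), patt_j hj hdisj] at h1
    exact flip2_ne _ h1
  show (Finset.image _ T ∪ Finset.image _ Finset.univ).card = T.card + m
  rw [Finset.card_union_of_disjoint hdis,
    Finset.card_image_of_injective _ embF_injective,
    Finset.card_image_of_injective _ (avtx_injective hj hk hdisj),
    Finset.card_univ, Fintype.card_fin]

lemma psi_inter_Dset (hj : Function.Injective j) (hdisj : ∀ q q', j q ≠ k q')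
    {e1 e2 : Fin m → Fin 2} {g : Fin m → Fin n → Fin 2} {T : Finset (Fin n → Fin 2)} :
    (↑(psiMap j k φ (⟨⟨e1, e2⟩, g, T⟩ : ParamT m n)) : Set (Fin ℓ → Fin 2))
        ∩ Dset (freeF j k) (patt j k e1 e2)
      = embF (freeF j k) (patt j k e1 e2) φ '' ↑T := by
  rw [show (↑(psiMap j k φ (⟨⟨e1, e2⟩, g, T⟩ : ParamT m n)) : Set (Fin ℓ → Fin 2))
    = (embF (freeF j k) (patt j k e1 e2) φ '' ↑T) ∪ Set.range (avtx j k e1 e2 φ g)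
    from psi_coe _]
  ext x
  constructor
  · rintro ⟨hx | ⟨q, rfl⟩, hxD⟩
    · exact hx
    · exact absurd hxD (avtx_notmem_Dset hj hdisj q)
  · intro hx
    refine ⟨Or.inl hx, ?_⟩
    obtain ⟨y, -, rfl⟩ := hx
    exact embF_mem_Dset y

lemma psi_inj (hℓ : 3 ≤ ℓ) (hm : 1 ≤ m)
    (hj : Function.Injective j) (hk : Function.Injective k)
    (hdisj : ∀ q q', j q ≠ k q') {p p' : ParamT m n}
    (hsp : bootClosure (gridAdj 2 n) 2 (↑p.2.2 : Set (Fin n → Fin 2)) = Set.univ)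
    (hsp' : bootClosure (gridAdj 2 n) 2 (↑p'.2.2 : Set (Fin n → Fin 2)) = Set.univ)
    (heq : psiMap j k φ p = psiMap j k φ p') : p = p' := by
  obtain ⟨-, hint, hsetm⟩ := psi_event (φ := φ) hm hj hk hdisj hsp
  obtain ⟨-, hint', hsetm'⟩ := psi_event (φ := φ) hm hj hk hdisj hsp'
  have hcoe : (↑(psiMap j k φ p) : Set (Fin ℓ → Fin 2)) = ↑(psiMap j k φ p') := by
    rw [heq]
  obtain ⟨⟨e1, e2⟩, g, T⟩ := p
  obtain ⟨⟨e1', e2'⟩, g', T'⟩ := p'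
  have hE : ∀ q, e1 q = e1' q ∧ e2 q = e2' q := by
    intro q
    exact face_unique hℓ (hdisj q q) (hint q) (by rw [hcoe]; exact hsetm' q)
  obtain rfl : e1 = e1' := funext fun q => (hE q).1
  obtain rfl : e2 = e2' := funext fun q => (hE q).2
  have havtx : ∀ q, avtx j k e1 e2 φ g q = avtx j k e1 e2 φ g' q := by
    intro q
    have h1 := hsetm q
    rw [hcoe, hsetm' q] at h1
    exact Set.singleton_eq_singleton_iff.1 h1.symm
  obtain rfl : g = g' := by
    funext q t
    have h1 := congrFun (havtx q) ((φ t : {i // i ∈ freeF j k}) : Fin ℓ)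
    have hne1 : ((φ t : {i // i ∈ freeF j k}) : Fin ℓ) ≠ j q :=
      fun h => j_notmem_freeF q (h ▸ (φ t).2)
    have hne2 : ((φ t : {i // i ∈ freeF j k}) : Fin ℓ) ≠ k q :=
      fun h => k_notmem_freeF q (h ▸ (φ t).2)
    rwa [avtx_other hne1 hne2, avtx_other hne1 hne2, embF_apply_phi, embF_apply_phi] at h1
  obtain rfl : T = T' := by
    apply Finset.coe_injective
    apply Set.image_injective.2 (embF_injective (F := freeF j k)
      (c := patt j k e1 e2) (φ := φ))
    rw [← psi_inter_Dset hj hdisj (g := g) (T := T),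
      ← psi_inter_Dset hj hdisj (g := g) (T := T'), hcoe]
  rfl

lemma psi_surj (hℓ : 3 ≤ ℓ) (hm : 1 ≤ m)
    (hj : Function.Injective j) (hk : Function.Injective k)
    (hdisj : ∀ q q', j q ≠ k q') {A : Finset (Fin ℓ → Fin 2)}
    (hA : ∀ q, FinalPair 2 ℓ (↑A) Set.univ (j q) (k q)) :
    ∃ p : ParamT m n,
      bootClosure (gridAdj 2 n) 2 (↑p.2.2 : Set (Fin n → Fin 2)) = Set.univ ∧
      psiMap j k φ p = A := by
  classical
  obtain ⟨e1, e2, a, haj, hak, hao, hdecomp, hDspan, hsetm⟩ :=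
    forward_struct hℓ hm hj hk hdisj hA
  set g : Fin m → Fin n → Fin 2 :=
    fun q t => a q ((φ t : {i // i ∈ freeF j k}) : Fin ℓ) with hg
  have havtx : avtx j k e1 e2 φ g = a := by
    funext q i
    by_cases hik : i = k q
    · subst hik; rw [avtx_k, hak]
    · by_cases hij : i = j q
      · subst hij; rw [avtx_j hdisj, haj]
      · rw [avtx_other hij hik]
        by_cases hiF : i ∈ freeF j k
        · rw [embF_apply_mem _ hiF]
          show g q (φ.symm ⟨i, hiF⟩) = a q i
          rw [hg]
          simp
        · rw [embF_apply_notmem _ hiF, (hao q i hiF hij hik).symm]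
  set T : Finset (Fin n → Fin 2) :=
    (A.filter (fun x => x ∈ Dset (freeF j k) (patt j k e1 e2))).image
      (fun x t => x ((φ t : {i // i ∈ freeF j k}) : Fin ℓ)) with hT
  have hTcoe : embF (freeF j k) (patt j k e1 e2) φ '' ↑T
      = ↑A ∩ Dset (freeF j k) (patt j k e1 e2) := by
    ext x
    constructor
    · rintro ⟨y, hy, rfl⟩
      rw [hT] at hy
      simp only [Finset.coe_image, Set.mem_image, Finset.coe_filter,
        Set.mem_setOf_eq] at hy
      obtain ⟨x', ⟨hx'A, hx'D⟩, rfl⟩ := hy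
      rw [embF_surj_on hx'D]
      exact ⟨hx'A, hx'D⟩
    · rintro ⟨hxA, hxD⟩
      refine ⟨fun t => x ((φ t : {i // i ∈ freeF j k}) : Fin ℓ), ?_, embF_surj_on hxD⟩
      rw [hT]
      simp only [Finset.coe_image, Set.mem_image, Finset.coe_filter, Set.mem_setOf_eq]
      exact ⟨x, ⟨hxA, hxD⟩, rfl⟩
  refine ⟨⟨⟨e1, e2⟩, g, T⟩, ?_, ?_⟩
  · apply (embF_spans_iff (F := freeF j k) (c := patt j k e1 e2) (φ := φ) _).1
    rw [hTcoe]
    exact hDspan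
  · apply Finset.coe_injective
    rw [psi_coe]
    show (embF (freeF j k) (patt j k e1 e2) φ '' ↑T) ∪ Set.range (avtx j k e1 e2 φ g) = ↑A
    rw [hTcoe, havtx]
    exact hdecomp.symm

end Count
end BP13
namespace BP13
open Set Function

lemma two_pow_add_le (ℓ m : ℕ) (hℓ : 3 ≤ ℓ) (hm : 1 ≤ m) (h2m : 2 * m ≤ ℓ) :
    2 ^ (ℓ - 2 * m) + m ≤ 2 ^ ℓ := by
  have h2 : (2:ℕ) ^ (ℓ - 2 * m) ≤ 2 ^ (ℓ - 2) := Nat.pow_le_pow_right (by norm_num) (by omega)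
  have h3 : ℓ - 1 < 2 ^ (ℓ - 1) := Nat.lt_two_pow_self
  have h5 : (2:ℕ) ^ (ℓ - 1) = 2 ^ (ℓ - 2) * 2 := by
    rw [← pow_succ]; congr 1; omega
  have h6 : (2:ℕ) ^ ℓ = 2 ^ (ℓ - 1) * 2 := by
    rw [← pow_succ]; congr 1; omega
  set a := (2:ℕ) ^ (ℓ - 2 * m)
  set b := (2:ℕ) ^ (ℓ - 2)
  set c := (2:ℕ) ^ (ℓ - 1)
  set d := (2:ℕ) ^ ℓ
  omega

end BP13

open BP13 in
theorem M_intersection_prob' (ℓ m : ℕ) (hℓ : 3 ≤ ℓ) (hm : 1 ≤ m) (h2m : 2 * m ≤ ℓ)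
    (j k : Fin m → Fin ℓ) (hjk : ∀ q, j q ≠ k q)
    (hpairs : ∀ q q', q ≠ q' → ({j q, k q} : Finset (Fin ℓ)) ≠ {j q', k q'})
    (p : ℝ) (hp : 0 < p) :
    ((Function.Injective j ∧ Function.Injective k ∧ ∀ q q', j q ≠ k q') →
      binProb p (fun A : Finset (Fin ℓ → Fin 2) =>
          ∀ q, FinalPair 2 ℓ (↑A : Set (Fin ℓ → Fin 2)) Set.univ (j q) (k q)) =
        (2 : ℝ) ^ (2 * m) * ((2 : ℝ) ^ (ℓ - 2 * m)) ^ m * p ^ m *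
          (1 - p) ^ (2 ^ ℓ - 2 ^ (ℓ - 2 * m) - m) * Pprob (ℓ - 2 * m) p) ∧
    (¬(Function.Injective j ∧ Function.Injective k ∧ ∀ q q', j q ≠ k q') →
      binProb p (fun A : Finset (Fin ℓ → Fin 2) =>
          ∀ q, FinalPair 2 ℓ (↑A : Set (Fin ℓ → Fin 2)) Set.univ (j q) (k q)) = 0) := by
  classical
  constructor
  · rintro ⟨hjinj, hkinj, hdisj⟩
    have hcard : Fintype.card {i // i ∈ freeF j k} = ℓ - 2 * m := by
      rw [Fintype.card_coe]; exact freeF_card hjinj hkinj hdisj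
    obtain ⟨φ⟩ : Nonempty (Fin (ℓ - 2 * m) ≃ {i // i ∈ freeF j k}) :=
      ⟨(Fintype.equivFinOfCardEq hcard).symm⟩
    have hVcard : Fintype.card (Fin ℓ → Fin 2) = 2 ^ ℓ := by
      rw [Fintype.card_fun, Fintype.card_fin, Fintype.card_fin]
    have hV'card : Fintype.card (Fin (ℓ - 2 * m) → Fin 2) = 2 ^ (ℓ - 2 * m) := by
      rw [Fintype.card_fun, Fintype.card_fin, Fintype.card_fin]
    have hle2 := two_pow_add_le ℓ m hℓ hm h2m
    -- step 1 : binProb as a filtered sum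
    have step1 : binProb p (fun A : Finset (Fin ℓ → Fin 2) =>
          ∀ q, FinalPair 2 ℓ (↑A : Set (Fin ℓ → Fin 2)) Set.univ (j q) (k q))
        = ∑ A ∈ Finset.univ.filter (fun A : Finset (Fin ℓ → Fin 2) =>
            ∀ q, FinalPair 2 ℓ (↑A : Set (Fin ℓ → Fin 2)) Set.univ (j q) (k q)),
            p ^ A.card * (1 - p) ^ (2 ^ ℓ - A.card) := by
      rw [binProb, Finset.sum_filter]
      apply Finset.sum_congr rfl
      intro A _
      rw [Set.indicator_apply]
      simp only [Set.mem_setOf_eq, hVcard]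
    -- step 2 : bijection with parameters
    have step2 : ∑ A ∈ Finset.univ.filter (fun A : Finset (Fin ℓ → Fin 2) =>
            ∀ q, FinalPair 2 ℓ (↑A : Set (Fin ℓ → Fin 2)) Set.univ (j q) (k q)),
            p ^ A.card * (1 - p) ^ (2 ^ ℓ - A.card)
        = ∑ pp ∈ Finset.univ.filter (fun pp : ParamT m (ℓ - 2 * m) =>
            bootClosure (gridAdj 2 (ℓ - 2 * m)) 2 (↑pp.2.2 : Set (Fin (ℓ - 2*m) → Fin 2))
              = Set.univ),
            p ^ (pp.2.2.card + m) * (1 - p) ^ (2 ^ ℓ - (pp.2.2.card + m)) := by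
      refine (Finset.sum_bij (fun pp _ => psiMap j k φ pp) ?_ ?_ ?_ ?_).symm
      · intro pp hpp
        rw [Finset.mem_filter] at hpp ⊢
        exact ⟨Finset.mem_univ _, (psi_event hm hjinj hkinj hdisj hpp.2).1⟩
      · intro p1 h1 p2 h2 he
        rw [Finset.mem_filter] at h1 h2
        exact psi_inj hℓ hm hjinj hkinj hdisj h1.2 h2.2 he
      · intro A hA
        rw [Finset.mem_filter] at hA
        obtain ⟨pp, hsp, hpsi⟩ := psi_surj (φ := φ) hℓ hm hjinj hkinj hdisj hA.2
        exact ⟨pp, Finset.mem_filter.2 ⟨Finset.mem_univ _, hsp⟩, hpsi⟩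
      · intro pp hpp
        rw [psi_card hjinj hkinj hdisj pp]
    -- step 3 : evaluate the parameter sum
    have hinner : (∑ T : Finset (Fin (ℓ - 2 * m) → Fin 2),
          if bootClosure (gridAdj 2 (ℓ - 2 * m)) 2 (↑T : Set (Fin (ℓ - 2*m) → Fin 2))
              = Set.univ
          then p ^ (T.card + m) * (1 - p) ^ (2 ^ ℓ - (T.card + m)) else 0)
        = p ^ m * (1 - p) ^ (2 ^ ℓ - 2 ^ (ℓ - 2 * m) - m) * Pprob (ℓ - 2 * m) p := by
      rw [Pprob, binProb, Finset.mul_sum]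
      apply Finset.sum_congr rfl
      intro T _
      rw [Set.indicator_apply]
      simp only [Set.mem_setOf_eq, hV'card]
      rw [mul_ite, mul_zero]
      split_ifs with h
      · have hTle : T.card ≤ 2 ^ (ℓ - 2 * m) := by
          have := Finset.card_le_univ T
          rwa [hV'card] at this
        have hexp : 2 ^ ℓ - (T.card + m)
            = (2 ^ ℓ - 2 ^ (ℓ - 2 * m) - m) + (2 ^ (ℓ - 2 * m) - T.card) := by
          omega
        rw [hexp, pow_add, pow_add]
        ring
      · rfl
    have step3 : ∑ pp ∈ Finset.univ.filter (fun pp : ParamT m (ℓ - 2 * m) =>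
            bootClosure (gridAdj 2 (ℓ - 2 * m)) 2 (↑pp.2.2 : Set (Fin (ℓ - 2*m) → Fin 2))
              = Set.univ),
            p ^ (pp.2.2.card + m) * (1 - p) ^ (2 ^ ℓ - (pp.2.2.card + m))
        = ((2 ^ m * 2 ^ m * (2 ^ (ℓ - 2 * m)) ^ m : ℕ) : ℝ) *
            (p ^ m * (1 - p) ^ (2 ^ ℓ - 2 ^ (ℓ - 2 * m) - m) * Pprob (ℓ - 2 * m) p) := by
      rw [Finset.sum_filter, Fintype.sum_prod_type]
      have hout : ∀ e : (Fin m → Fin 2) × (Fin m → Fin 2),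
          (∑ gT : (Fin m → Fin (ℓ - 2 * m) → Fin 2) × Finset (Fin (ℓ - 2 * m) → Fin 2),
            if bootClosure (gridAdj 2 (ℓ - 2 * m)) 2
                (↑(e, gT).2.2 : Set (Fin (ℓ - 2*m) → Fin 2)) = Set.univ
            then p ^ ((e, gT).2.2.card + m) * (1 - p) ^ (2 ^ ℓ - ((e, gT).2.2.card + m))
            else 0)
          = ((2 ^ (ℓ - 2 * m)) ^ m : ℕ) *
              (p ^ m * (1 - p) ^ (2 ^ ℓ - 2 ^ (ℓ - 2 * m) - m) * Pprob (ℓ - 2 * m) p) := by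
        intro e
        rw [Fintype.sum_prod_type]
        have : ∀ g : Fin m → Fin (ℓ - 2 * m) → Fin 2,
            (∑ T : Finset (Fin (ℓ - 2 * m) → Fin 2),
              if bootClosure (gridAdj 2 (ℓ - 2 * m)) 2
                  (↑T : Set (Fin (ℓ - 2*m) → Fin 2)) = Set.univ
              then p ^ (T.card + m) * (1 - p) ^ (2 ^ ℓ - (T.card + m)) else 0)
            = p ^ m * (1 - p) ^ (2 ^ ℓ - 2 ^ (ℓ - 2 * m) - m) * Pprob (ℓ - 2 * m) p :=
          fun _ => hinner
        calc (∑ g : Fin m → Fin (ℓ - 2 * m) → Fin 2,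
              ∑ T : Finset (Fin (ℓ - 2 * m) → Fin 2),
              if bootClosure (gridAdj 2 (ℓ - 2 * m)) 2
                  (↑T : Set (Fin (ℓ - 2*m) → Fin 2)) = Set.univ
              then p ^ (T.card + m) * (1 - p) ^ (2 ^ ℓ - (T.card + m)) else 0)
            = ∑ _g : Fin m → Fin (ℓ - 2 * m) → Fin 2,
                p ^ m * (1 - p) ^ (2 ^ ℓ - 2 ^ (ℓ - 2 * m) - m) * Pprob (ℓ - 2 * m) p :=
              Finset.sum_congr rfl (fun g _ => this g)
          _ = ((2 ^ (ℓ - 2 * m)) ^ m : ℕ) *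
              (p ^ m * (1 - p) ^ (2 ^ ℓ - 2 ^ (ℓ - 2 * m) - m) * Pprob (ℓ - 2 * m) p) := by
              rw [Finset.sum_const, Finset.card_univ, nsmul_eq_mul]
              congr 2
              rw [Fintype.card_fun, Fintype.card_fin, hV'card]
      calc (∑ e : (Fin m → Fin 2) × (Fin m → Fin 2),
            ∑ gT : (Fin m → Fin (ℓ - 2 * m) → Fin 2) × Finset (Fin (ℓ - 2 * m) → Fin 2),
            if bootClosure (gridAdj 2 (ℓ - 2 * m)) 2
                (↑(e, gT).2.2 : Set (Fin (ℓ - 2*m) → Fin 2)) = Set.univ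
            then p ^ ((e, gT).2.2.card + m) * (1 - p) ^ (2 ^ ℓ - ((e, gT).2.2.card + m))
            else 0)
          = ∑ _e : (Fin m → Fin 2) × (Fin m → Fin 2),
              ((2 ^ (ℓ - 2 * m)) ^ m : ℕ) *
              (p ^ m * (1 - p) ^ (2 ^ ℓ - 2 ^ (ℓ - 2 * m) - m) * Pprob (ℓ - 2 * m) p) :=
            Finset.sum_congr rfl (fun e _ => hout e)
        _ = ((2 ^ m * 2 ^ m * (2 ^ (ℓ - 2 * m)) ^ m : ℕ) : ℝ) *
            (p ^ m * (1 - p) ^ (2 ^ ℓ - 2 ^ (ℓ - 2 * m) - m) * Pprob (ℓ - 2 * m) p) := by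
            rw [Finset.sum_const, Finset.card_univ, nsmul_eq_mul]
            push_cast
            rw [Fintype.card_prod, Fintype.card_fun, Fintype.card_fin, Fintype.card_fin]
            push_cast
            ring
    rw [step1, step2, step3]
    push_cast
    rw [show 2 * m = m + m by ring, pow_add]
    ring
  · intro hninj
    rw [binProb]
    apply Finset.sum_eq_zero
    intro A _
    apply Set.indicator_of_notMem
    intro hA
    have hA' : ∀ q, FinalPair 2 ℓ (↑A : Set (Fin ℓ → Fin 2)) Set.univ (j q) (k q) := hA
    have hshared : ∃ q q', q ≠ q' ∧
        (j q = j q' ∨ j q = k q' ∨ k q = j q' ∨ k q = k q') := by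
      by_contra hcon
      push_neg at hcon
      apply hninj
      refine ⟨?_, ?_, ?_⟩
      · intro q q' h
        by_contra hne
        exact (hcon q q' hne).1 h
      · intro q q' h
        by_contra hne
        exact (hcon q q' hne).2.2.2 h
      · intro q q'
        by_cases h : q = q'
        · subst h; exact hjk q
        · exact (hcon q q' h).2.1
    obtain ⟨q, q', hne, hsh⟩ := hshared
    exact zero_case hℓ (hjk q) (hjk q') (hpairs q q' hne) hsh (hA' q) (hA' q')

/-- The probability of an intersection of final-pair events
`M_ℓ(j_q,k_q)`. -/
theorem M_intersection_prob (ℓ m : ℕ) (hℓ : 3 ≤ ℓ) (hm : 1 ≤ m) (h2m : 2 * m ≤ ℓ)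
    (j k : Fin m → Fin ℓ) (hjk : ∀ q, j q ≠ k q)
    (hpairs : ∀ q q', q ≠ q' → ({j q, k q} : Finset (Fin ℓ)) ≠ {j q', k q'})
    (p : ℝ) (hp : 0 < p) :
    ((Function.Injective j ∧ Function.Injective k ∧ ∀ q q', j q ≠ k q') →
      binProb p (fun A : Finset (Fin ℓ → Fin 2) =>
          ∀ q, FinalPair 2 ℓ (↑A : Set (Fin ℓ → Fin 2)) Set.univ (j q) (k q)) =
        (2 : ℝ) ^ (2 * m) * ((2 : ℝ) ^ (ℓ - 2 * m)) ^ m * p ^ m *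
          (1 - p) ^ (2 ^ ℓ - 2 ^ (ℓ - 2 * m) - m) * Pprob (ℓ - 2 * m) p) ∧
    (¬(Function.Injective j ∧ Function.Injective k ∧ ∀ q q', j q ≠ k q') →
      binProb p (fun A : Finset (Fin ℓ → Fin 2) =>
          ∀ q, FinalPair 2 ℓ (↑A : Set (Fin ℓ → Fin 2)) Set.univ (j q) (k q)) = 0) := by
  exact M_intersection_prob' ℓ m hℓ hm h2m j k hjk hpairs p hp
end

section
/- Let n, d, ℓ ∈ ℕ and p ∈ (0,1). Suppose Q ⊆ [n]^d is a cube with dim(Q) = ℓ. Then P(Q,p) ≤ P(ℓ,p), where P(Q,p) is the probability that A ~ Bin(Q,p) internally spans Q and P(ℓ,p) is the probability that A ~ Bin([2]^ℓ,p) internally spans [2]^ℓ. -/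
section BootBasics

variable {V : Type*} (adj : V → V → Prop) (r : ℕ)

lemma subset_bootStep (A : Set V) : A ⊆ bootStep adj r A := Set.subset_union_left

lemma subset_bootClosure (A : Set V) : A ⊆ bootClosure adj r A := by
  intro v hv
  exact Set.mem_iUnion.mpr ⟨0, hv⟩

lemma bootStep_mono [Finite V] {A B : Set V} (h : A ⊆ B) :
    bootStep adj r A ⊆ bootStep adj r B := by
  rintro v (hv | hv)
  · exact Or.inl (h hv)
  · refine Or.inr ?_
    refine le_trans hv (Set.ncard_le_ncard ?_ (Set.toFinite _))
    rintro u ⟨h1, h2⟩; exact ⟨h1, h h2⟩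

lemma bootStep_iterate_mono [Finite V] {A B : Set V} (h : A ⊆ B) (t : ℕ) :
    (bootStep adj r)^[t] A ⊆ (bootStep adj r)^[t] B := by
  induction t with
  | zero => exact h
  | succ t ih =>
      rw [Function.iterate_succ_apply', Function.iterate_succ_apply']
      exact bootStep_mono adj r ih

lemma bootStep_iterate_le [Finite V] (A : Set V) {t s : ℕ} (h : t ≤ s) :
    (bootStep adj r)^[t] A ⊆ (bootStep adj r)^[s] A := by
  induction s with
  | zero => simp only [Nat.le_zero.mp h]; exact subset_rfl
  | succ s ih =>
      rcases Nat.lt_or_ge t (s+1) with h' | h'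
      · refine (ih (by omega)).trans ?_
        rw [Function.iterate_succ_apply']
        exact subset_bootStep adj r _
      · have : t = s + 1 := by omega
        subst this; exact subset_rfl

lemma bootClosure_mono [Finite V] {A B : Set V} (h : A ⊆ B) :
    bootClosure adj r A ⊆ bootClosure adj r B := by
  intro v hv
  obtain ⟨t, ht⟩ := Set.mem_iUnion.mp hv
  exact Set.mem_iUnion.mpr ⟨t, bootStep_iterate_mono adj r h t ht⟩

lemma bootClosure_absorb [Finite V] {A : Set V} {v u₁ u₂ : V} (h12 : u₁ ≠ u₂)
    (h1 : adj v u₁) (h2 : adj v u₂) (hu1 : u₁ ∈ bootClosure adj 2 A)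
    (hu2 : u₂ ∈ bootClosure adj 2 A) : v ∈ bootClosure adj 2 A := by
  obtain ⟨t₁, ht₁⟩ := Set.mem_iUnion.mp hu1
  obtain ⟨t₂, ht₂⟩ := Set.mem_iUnion.mp hu2
  refine Set.mem_iUnion.mpr ⟨max t₁ t₂ + 1, ?_⟩
  rw [Function.iterate_succ_apply']
  refine Or.inr ?_
  have hA1 : u₁ ∈ (bootStep adj 2)^[max t₁ t₂] A :=
    bootStep_iterate_le adj 2 A (le_max_left _ _) ht₁
  have hA2 : u₂ ∈ (bootStep adj 2)^[max t₁ t₂] A :=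
    bootStep_iterate_le adj 2 A (le_max_right _ _) ht₂
  have : ({u₁, u₂} : Set V) ⊆ {u | adj v u ∧ u ∈ (bootStep adj 2)^[max t₁ t₂] A} := by
    rintro u (rfl | rfl)
    · exact ⟨h1, hA1⟩
    · exact ⟨h2, hA2⟩
  calc (2 : ℕ) = ({u₁, u₂} : Set V).ncard := (Set.ncard_pair h12).symm
    _ ≤ _ := Set.ncard_le_ncard this (Set.toFinite _)

lemma bootStep_bootClosure [Finite V] (A : Set V) :
    bootStep adj 2 (bootClosure adj 2 A) ⊆ bootClosure adj 2 A := by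
  rintro v (hv | hv)
  · exact hv
  · obtain ⟨u₁, u₂, hu₁, hu₂, hne⟩ := (Set.one_lt_ncard_iff (Set.toFinite _)).mp
      (lt_of_lt_of_le one_lt_two hv)
    exact bootClosure_absorb adj hne hu₁.1 hu₂.1 hu₁.2 hu₂.2

lemma bootClosure_idem [Finite V] (A : Set V) :
    bootClosure adj 2 (bootClosure adj 2 A) ⊆ bootClosure adj 2 A := by
  intro v hv
  obtain ⟨t, ht⟩ := Set.mem_iUnion.mp hv
  clear hv
  induction t generalizing v with
  | zero => exact ht
  | succ t ih =>
      rw [Function.iterate_succ_apply'] at ht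
      have : (bootStep adj 2)^[t] (bootClosure adj 2 A) ⊆ bootClosure adj 2 A :=
        fun w hw => ih hw
      exact bootStep_bootClosure adj A (bootStep_mono adj 2 this ht)

/-- Transfer of bootstrap infection along an injective local homomorphism. -/
lemma bootClosure_image [Finite V] {W : Type*} [Finite W] {adjW : W → W → Prop}
    {ι : V → W} {Q A : Set V} (hA : A ⊆ Q) (hconf : bootClosure adj 2 A ⊆ Q)
    (hinj : Set.InjOn ι Q)
    (hhom : ∀ u v, u ∈ Q → v ∈ Q → adj u v → adjW (ι u) (ι v)) :
    ι '' bootClosure adj 2 A ⊆ bootClosure adjW 2 (ι '' A) := by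
  rintro w ⟨v, hv, rfl⟩
  obtain ⟨t, ht⟩ := Set.mem_iUnion.mp hv
  clear hv
  induction t generalizing v with
  | zero => exact subset_bootClosure adjW 2 _ ⟨v, ht, rfl⟩
  | succ t ih =>
      rw [Function.iterate_succ_apply'] at ht
      rcases ht with ht | ht
      · exact ih v ht
      · have hsub : (bootStep adj 2)^[t] A ⊆ bootClosure adj 2 A :=
          fun w hw => Set.mem_iUnion.mpr ⟨t, hw⟩
        obtain ⟨u₁, u₂, hu₁, hu₂, hne⟩ := (Set.one_lt_ncard_iff (Set.toFinite _)).mp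
          (lt_of_lt_of_le one_lt_two ht)
        have hvQ : v ∈ Q := hconf (Set.mem_iUnion.mpr ⟨t+1, by
          rw [Function.iterate_succ_apply']; exact Or.inr ht⟩)
        have hu₁Q : u₁ ∈ Q := hconf (hsub hu₁.2)
        have hu₂Q : u₂ ∈ Q := hconf (hsub hu₂.2)
        refine bootClosure_absorb adjW (fun h => hne (hinj hu₁Q hu₂Q h))
          (hhom v u₁ hvQ hu₁Q hu₁.1) (hhom v u₂ hvQ hu₂Q hu₂.1)
          (ih u₁ hu₁.2) (ih u₂ hu₂.2)

end BootBasics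

section GridLemmas

lemma gridAdj_symm {n d : ℕ} {x y : Fin d → Fin n} (h : gridAdj n d x y) : gridAdj n d y x := by
  obtain ⟨i, h1, h2⟩ := h
  exact ⟨i, h1.symm, fun j hj => (h2 j hj).symm⟩

lemma snoc_inj {ℓ : ℕ} {a b : Fin ℓ → Fin 2} {ε δ : Fin 2}
    (h : (Fin.snoc a ε : Fin (ℓ + 1) → Fin 2) = Fin.snoc b δ) : a = b ∧ ε = δ := by
  constructor
  · funext j
    have := congrFun h j.castSucc
    simpa [Fin.snoc_castSucc] using this
  · have := congrFun h (Fin.last ℓ)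
    simpa [Fin.snoc_last] using this

lemma gridAdj_snoc {ℓ : ℕ} {a b : Fin ℓ → Fin 2} (ε : Fin 2) (h : gridAdj 2 ℓ a b) :
    gridAdj 2 (ℓ + 1) (Fin.snoc a ε) (Fin.snoc b ε) := by
  obtain ⟨i, h1, h2⟩ := h
  refine ⟨i.castSucc, by simpa [Fin.snoc_castSucc] using h1, fun j hj => ?_⟩
  induction j using Fin.lastCases with
  | last => simp [Fin.snoc_last]
  | cast j' =>
      have : j' ≠ i := fun hh => hj (by rw [hh])
      simp only [Fin.snoc_castSucc]
      exact h2 j' this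

lemma gridAdj_snoc_last {ℓ : ℕ} (a : Fin ℓ → Fin 2) :
    gridAdj 2 (ℓ + 1) (Fin.snoc a 0) (Fin.snoc a 1) := by
  refine ⟨Fin.last ℓ, ?_, fun j hj => ?_⟩
  · simp [Fin.snoc_last]
  · obtain ⟨j', rfl⟩ := Fin.exists_castSucc_eq.mpr hj
    simp [Fin.snoc_castSucc]

lemma image_eval_box {n d : ℕ} (lo hi : Fin d → Fin n) (hle : ∀ i, lo i ≤ hi i) (i : Fin d) :
    (fun x => x i) '' {x : Fin d → Fin n | ∀ j, lo j ≤ x j ∧ x j ≤ hi j} =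
      Set.Icc (lo i) (hi i) := by
  ext v
  constructor
  · rintro ⟨x, hx, rfl⟩
    exact ⟨(hx i).1, (hx i).2⟩
  · rintro ⟨h1, h2⟩
    refine ⟨Function.update lo i v, fun j => ?_, Function.update_self i v lo⟩
    rcases eq_or_ne j i with rfl | hj
    · simp [Function.update_self, h1, h2]
    · simp [Function.update_of_ne hj, hle j]

lemma cubeDim_box {n d : ℕ} (lo hi : Fin d → Fin n) (hle : ∀ i, lo i ≤ hi i) :
    cubeDim {x : Fin d → Fin n | ∀ j, lo j ≤ x j ∧ x j ≤ hi j} =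
      ∑ i : Fin d, ((hi i : ℕ) - (lo i : ℕ)) := by
  unfold cubeDim
  refine Finset.sum_congr rfl fun i _ => ?_
  rw [image_eval_box lo hi hle i, ← Finset.coe_Icc, Set.ncard_coe_finset, Fin.card_Icc]
  omega

end GridLemmas

/-- Every cube of dimension `ℓ` admits an injective local homomorphism into `[2]^ℓ`
whose image internally spans `[2]^ℓ`. -/
lemma exists_embed {n d : ℕ} : ∀ (ℓ : ℕ) (Q : Set (Fin d → Fin n)), IsCube Q →
    cubeDim Q = ℓ →
    ∃ ι : (Fin d → Fin n) → (Fin ℓ → Fin 2), Set.InjOn ι Q ∧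
      (∀ u v, u ∈ Q → v ∈ Q → gridAdj n d u v → gridAdj 2 ℓ (ι u) (ι v)) ∧
      bootClosure (gridAdj 2 ℓ) 2 (ι '' Q) = Set.univ := by
  intro ℓ
  induction ℓ with
  | zero =>
      rintro Q ⟨lo, hi, hle, rfl⟩ hdim
      rw [cubeDim_box lo hi hle] at hdim
      have hloQ : lo ∈ {x : Fin d → Fin n | ∀ j, lo j ≤ x j ∧ x j ≤ hi j} :=
        fun j => ⟨le_refl _, hle j⟩
      have hsub : ∀ x ∈ {x : Fin d → Fin n | ∀ j, lo j ≤ x j ∧ x j ≤ hi j},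
          ∀ y ∈ {x : Fin d → Fin n | ∀ j, lo j ≤ x j ∧ x j ≤ hi j}, x = y := by
        intro x hx y hy
        funext j
        have h0 : (hi j : ℕ) - (lo j : ℕ) = 0 :=
          Finset.sum_eq_zero_iff.mp hdim j (Finset.mem_univ j)
        have h1 := hx j; have h2 := hy j
        rw [Fin.le_def, Fin.le_def] at h1 h2
        exact Fin.ext (by omega)
      refine ⟨fun _ => Fin.elim0, fun x hx y hy _ => hsub x hx y hy, ?_, ?_⟩
      · intro u v hu hv hadj
        obtain ⟨i, h1, -⟩ := hadj
        have := hsub u hu v hv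
        subst this
        omega
      · apply Set.eq_univ_of_univ_subset
        intro z _
        refine subset_bootClosure _ _ _ ⟨lo, hloQ, ?_⟩
        funext j; exact j.elim0
  | succ ℓ ih =>
      rintro Q ⟨lo, hi, hle, rfl⟩ hdim
      rw [cubeDim_box lo hi hle] at hdim
      have hex : ∃ i ∈ Finset.univ, (hi i : ℕ) - (lo i : ℕ) ≠ 0 :=
        Finset.exists_ne_zero_of_sum_ne_zero (by rw [hdim]; exact Nat.succ_ne_zero ℓ)
      obtain ⟨i, -, hi0⟩ := hex
      have hlt : (lo i : ℕ) < (hi i : ℕ) := by omega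
      set k : Fin n := ⟨(hi i : ℕ) - 1, by have := (hi i).isLt; omega⟩ with hk
      have hkv : (k : ℕ) = (hi i : ℕ) - 1 := rfl
      set hi' : Fin d → Fin n := Function.update hi i k with hhi'
      have hle' : ∀ j, lo j ≤ hi' j := by
        intro j
        rcases eq_or_ne j i with rfl | hj
        · rw [hhi', Function.update_self, Fin.le_def]; omega
        · rw [hhi', Function.update_of_ne hj]; exact hle j
      have hi'le : ∀ j, (hi' j : ℕ) ≤ (hi j : ℕ) := by
        intro j
        rcases eq_or_ne j i with rfl | hj
        · rw [hhi', Function.update_self]; omega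
        · rw [hhi', Function.update_of_ne hj]
      set Q' : Set (Fin d → Fin n) := {x | ∀ j, lo j ≤ x j ∧ x j ≤ hi' j} with hQ'
      have hQ'sub : Q' ⊆ {x : Fin d → Fin n | ∀ j, lo j ≤ x j ∧ x j ≤ hi j} := by
        intro x hx j
        refine ⟨(hx j).1, ?_⟩
        rw [Fin.le_def]
        exact le_trans (Fin.le_def.mp (hx j).2) (hi'le j)
      have hii' : (hi' i : ℕ) = (hi i : ℕ) - 1 := by
        rw [hhi', Function.update_self]
      have hdim' : cubeDim Q' = ℓ := by
        rw [hQ', cubeDim_box lo hi' hle']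
        have heq : ∑ j ∈ Finset.univ.erase i, ((hi' j : ℕ) - (lo j : ℕ)) =
            ∑ j ∈ Finset.univ.erase i, ((hi j : ℕ) - (lo j : ℕ)) :=
          Finset.sum_congr rfl (fun j hj => by
            rw [hhi', Function.update_of_ne (Finset.ne_of_mem_erase hj)])
        have e1 : ∑ j : Fin d, ((hi j : ℕ) - (lo j : ℕ)) =
            ((hi i : ℕ) - (lo i : ℕ)) + ∑ j ∈ Finset.univ.erase i, ((hi j : ℕ) - (lo j : ℕ)) :=
          (Finset.add_sum_erase _ _ (Finset.mem_univ i)).symm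
        have e2 : ∑ j : Fin d, ((hi' j : ℕ) - (lo j : ℕ)) =
            ((hi' i : ℕ) - (lo i : ℕ)) + ∑ j ∈ Finset.univ.erase i, ((hi' j : ℕ) - (lo j : ℕ)) :=
          (Finset.add_sum_erase _ _ (Finset.mem_univ i)).symm
        omega
      obtain ⟨ι', hinj', hhom', hspan'⟩ := ih Q' ⟨lo, hi', hle', rfl⟩ hdim'
      classical
      set ι : (Fin d → Fin n) → (Fin (ℓ + 1) → Fin 2) := fun x =>
        if (k : ℕ) < (x i : ℕ) then Fin.snoc (ι' (Function.update x i k)) 1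
        else Fin.snoc (ι' x) 0 with hι
      -- basic facts about membership
      have hmem_bot : ∀ x, x ∈ {x : Fin d → Fin n | ∀ j, lo j ≤ x j ∧ x j ≤ hi j} →
          (x i : ℕ) ≤ (k : ℕ) → x ∈ Q' := by
        intro x hx hxi j
        refine ⟨(hx j).1, ?_⟩
        rcases eq_or_ne j i with rfl | hj
        · rw [hhi', Function.update_self, Fin.le_def]; omega
        · rw [hhi', Function.update_of_ne hj]; exact (hx j).2
      have hmem_top : ∀ x, x ∈ {x : Fin d → Fin n | ∀ j, lo j ≤ x j ∧ x j ≤ hi j} →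
          (k : ℕ) < (x i : ℕ) → Function.update x i k ∈ Q' := by
        intro x hx hxi j
        rcases eq_or_ne j i with rfl | hj
        · rw [Function.update_self, hhi', Function.update_self]
          exact ⟨Fin.le_def.mpr (by omega), le_refl _⟩
        · rw [Function.update_of_ne hj, hhi', Function.update_of_ne hj]
          exact hx j
      have htopval : ∀ x, x ∈ {x : Fin d → Fin n | ∀ j, lo j ≤ x j ∧ x j ≤ hi j} →
          (k : ℕ) < (x i : ℕ) → x i = hi i := by
        intro x hx hxi
        have := Fin.le_def.mp (hx i).2
        exact Fin.ext (by omega)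
      have hιbot : ∀ x, (x i : ℕ) ≤ (k : ℕ) → ι x = Fin.snoc (ι' x) 0 := by
        intro x hx
        rw [hι]; exact if_neg (not_lt.mpr hx)
      have hιtop : ∀ x, (k : ℕ) < (x i : ℕ) →
          ι x = Fin.snoc (ι' (Function.update x i k)) 1 := by
        intro x hx
        rw [hι]; exact if_pos hx
      refine ⟨ι, ?_, ?_, ?_⟩
      -- injectivity
      · intro x hx y hy hxy
        rcases le_or_gt (x i : ℕ) (k : ℕ) with hxi | hxi <;>
          rcases le_or_gt (y i : ℕ) (k : ℕ) with hyi | hyi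
        · rw [hιbot x hxi, hιbot y hyi] at hxy
          exact hinj' (hmem_bot x hx hxi) (hmem_bot y hy hyi) (snoc_inj hxy).1
        · rw [hιbot x hxi, hιtop y hyi] at hxy
          exact absurd (snoc_inj hxy).2 (by decide)
        · rw [hιtop x hxi, hιbot y hyi] at hxy
          exact absurd (snoc_inj hxy).2 (by decide)
        · rw [hιtop x hxi, hιtop y hyi] at hxy
          have hupd := hinj' (hmem_top x hx hxi) (hmem_top y hy hyi) (snoc_inj hxy).1
          funext j
          rcases eq_or_ne j i with rfl | hj
          · rw [htopval x hx hxi, htopval y hy hyi]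
          · have := congrFun hupd j
            rwa [Function.update_of_ne hj, Function.update_of_ne hj] at this
      -- homomorphism
      · intro u v hu hv hadj
        obtain ⟨jd, hj1, hj2⟩ := hadj
        rcases le_or_gt (u i : ℕ) (k : ℕ) with hui | hui <;>
          rcases le_or_gt (v i : ℕ) (k : ℕ) with hvi | hvi
        · -- both bottom
          rw [hιbot u hui, hιbot v hvi]
          exact gridAdj_snoc 0 (hhom' u v (hmem_bot u hu hui) (hmem_bot v hv hvi)
            ⟨jd, hj1, hj2⟩)
        · -- u bottom, v top : jd = i, u = update v i k
          have hjdi : jd = i := by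
            by_contra hjd
            have := hj2 i (fun h => hjd h.symm)
            rw [this] at hui; omega
          rw [hjdi] at hj1 hj2
          have huv : Function.update v i k = u := by
            funext j
            rcases eq_or_ne j i with rfl | hj
            · rw [Function.update_self]
              have hvtop := Fin.le_def.mp (hv j).2
              exact Fin.ext (by omega)
            · rw [Function.update_of_ne hj]
              exact (hj2 j hj).symm
          rw [hιbot u hui, hιtop v hvi, huv]
          exact gridAdj_snoc_last (ι' u)
        · -- u top, v bottom
          have hjdi : jd = i := by
            by_contra hjd
            have := hj2 i (fun h => hjd h.symm)
            rw [this] at hui; omega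
          rw [hjdi] at hj1 hj2
          have huv : Function.update u i k = v := by
            funext j
            rcases eq_or_ne j i with rfl | hj
            · rw [Function.update_self]
              have hutop := Fin.le_def.mp (hu j).2
              exact Fin.ext (by omega)
            · rw [Function.update_of_ne hj]
              exact hj2 j hj
          rw [hιtop u hui, hιbot v hvi, huv]
          exact gridAdj_symm (gridAdj_snoc_last (ι' v))
        · -- both top
          have hjdne : jd ≠ i := by
            rintro rfl
            rw [htopval u hu hui, htopval v hv hvi] at hj1
            omega
          have hadj' : gridAdj n d (Function.update u i k) (Function.update v i k) := by
            refine ⟨jd, ?_, ?_⟩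
            · rwa [Function.update_of_ne hjdne, Function.update_of_ne hjdne]
            · intro j hj
              rcases eq_or_ne j i with rfl | hji
              · rw [Function.update_self, Function.update_self]
              · rw [Function.update_of_ne hji, Function.update_of_ne hji]
                exact hj2 j hj
          rw [hιtop u hui, hιtop v hvi]
          exact gridAdj_snoc 1 (hhom' _ _ (hmem_top u hu hui) (hmem_top v hv hvi) hadj')
      -- spanning
      · apply Set.eq_univ_of_univ_subset
        set D := bootClosure (gridAdj 2 (ℓ + 1)) 2
          (ι '' {x : Fin d → Fin n | ∀ j, lo j ≤ x j ∧ x j ≤ hi j}) with hD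
        have hbot : ∀ b : Fin ℓ → Fin 2, (Fin.snoc b 0 : Fin (ℓ+1) → Fin 2) ∈ D := by
          have himg : (fun b : Fin ℓ → Fin 2 => (Fin.snoc b 0 : Fin (ℓ+1) → Fin 2)) ''
              (bootClosure (gridAdj 2 ℓ) 2 (ι' '' Q')) ⊆
              bootClosure (gridAdj 2 (ℓ+1)) 2
                ((fun b : Fin ℓ → Fin 2 => (Fin.snoc b 0 : Fin (ℓ+1) → Fin 2)) ''
                  (ι' '' Q')) := by
            refine bootClosure_image (gridAdj 2 ℓ) (Q := Set.univ) (Set.subset_univ _)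
              (Set.subset_univ _) ?_ ?_
            · intro a _ b _ hab
              exact (snoc_inj hab).1
            · intro a b _ _ hab
              exact gridAdj_snoc 0 hab
          have hsub2 : (fun b : Fin ℓ → Fin 2 => (Fin.snoc b 0 : Fin (ℓ+1) → Fin 2)) ''
              (ι' '' Q') ⊆ ι '' {x : Fin d → Fin n | ∀ j, lo j ≤ x j ∧ x j ≤ hi j} := by
            rintro w ⟨b, ⟨x, hxQ', rfl⟩, rfl⟩
            refine ⟨x, hQ'sub hxQ', ?_⟩
            have hxk : (x i : ℕ) ≤ (k : ℕ) := by
              have := Fin.le_def.mp (hxQ' i).2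
              rwa [hhi', Function.update_self] at this
            rw [hιbot x hxk]
          intro b
          have hb : (Fin.snoc b 0 : Fin (ℓ+1) → Fin 2) ∈
              (fun b : Fin ℓ → Fin 2 => (Fin.snoc b 0 : Fin (ℓ+1) → Fin 2)) ''
                (bootClosure (gridAdj 2 ℓ) 2 (ι' '' Q')) := by
            refine ⟨b, ?_, rfl⟩
            rw [hspan']; trivial
          exact bootClosure_mono _ _ hsub2 (himg hb)
        -- the top seed
        set xtop : Fin d → Fin n := Function.update lo i (hi i) with hxtop
        have hxtopQ : xtop ∈ {x : Fin d → Fin n | ∀ j, lo j ≤ x j ∧ x j ≤ hi j} := by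
          intro j
          rcases eq_or_ne j i with rfl | hj
          · rw [hxtop, Function.update_self]; exact ⟨hle j, le_refl _⟩
          · rw [hxtop, Function.update_of_ne hj]; exact ⟨le_refl _, hle j⟩
        have hxtopk : (k : ℕ) < (xtop i : ℕ) := by
          rw [hxtop, Function.update_self]; omega
        set b₀ : Fin ℓ → Fin 2 := ι' (Function.update xtop i k) with hb₀
        have hseed : (Fin.snoc b₀ 1 : Fin (ℓ+1) → Fin 2) ∈ D := by
          refine subset_bootClosure _ _ _ ⟨xtop, hxtopQ, ?_⟩
          rw [hιtop xtop hxtopk, hb₀]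
        have htop : ∀ b : Fin ℓ → Fin 2, (Fin.snoc b 1 : Fin (ℓ+1) → Fin 2) ∈ D := by
          have key : ∀ m : ℕ, ∀ b : Fin ℓ → Fin 2,
              (Finset.univ.filter (fun j => b j ≠ b₀ j)).card ≤ m →
              (Fin.snoc b 1 : Fin (ℓ+1) → Fin 2) ∈ D := by
            intro m
            induction m with
            | zero =>
                intro b hb
                have : b = b₀ := by
                  funext j
                  by_contra hj
                  have : j ∈ Finset.univ.filter (fun j => b j ≠ b₀ j) := by
                    simp [hj]
                  simp [Finset.card_eq_zero.mp (Nat.le_zero.mp hb)] at this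
                rw [this]; exact hseed
            | succ m ihm =>
                intro b hb
                by_cases hbb : b = b₀
                · rw [hbb]; exact hseed
                · have : ∃ j, b j ≠ b₀ j := by
                    by_contra hno
                    push_neg at hno
                    exact hbb (funext hno)
                  obtain ⟨j, hj⟩ := this
                  set b' := Function.update b j (b₀ j) with hb'
                  have hcard : (Finset.univ.filter (fun j' => b' j' ≠ b₀ j')).card ≤ m := by
                    have hsub3 : Finset.univ.filter (fun j' => b' j' ≠ b₀ j') ⊆
                        (Finset.univ.filter (fun j' => b j' ≠ b₀ j')).erase j := by
                      intro j' hj'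
                      simp only [Finset.mem_filter, Finset.mem_univ, true_and] at hj'
                      rcases eq_or_ne j' j with rfl | hjj
                      · rw [hb', Function.update_self] at hj'
                        exact absurd rfl hj'
                      · refine Finset.mem_erase.mpr ⟨hjj, ?_⟩
                        rw [hb', Function.update_of_ne hjj] at hj'
                        simp [hj']
                    have := Finset.card_le_card hsub3
                    have hjmem : j ∈ Finset.univ.filter (fun j' => b j' ≠ b₀ j') := by
                      simp [hj]
                    have := Finset.card_erase_of_mem hjmem
                    omega
                  have hb'D := ihm b' hcard
                  have hadjbb' : gridAdj 2 ℓ b b' := by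
                    refine ⟨j, ?_, ?_⟩
                    · rw [hb', Function.update_self]
                      have h1 := (b j).isLt
                      have h2 := (b₀ j).isLt
                      have h3 : (b j : ℕ) ≠ (b₀ j : ℕ) := fun h => hj (Fin.ext h)
                      omega
                    · intro j' hjj
                      rw [hb', Function.update_of_ne hjj]
                  refine bootClosure_absorb _ (v := (Fin.snoc b 1 : Fin (ℓ+1) → Fin 2))
                    (u₁ := (Fin.snoc b' 1 : Fin (ℓ+1) → Fin 2))
                    (u₂ := (Fin.snoc b 0 : Fin (ℓ+1) → Fin 2)) ?_ ?_ ?_ hb'D (hbot b)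
                  · intro h
                    exact absurd (snoc_inj h).2 (by decide)
                  · exact gridAdj_snoc 1 hadjbb'
                  · exact gridAdj_symm (gridAdj_snoc_last b)
          intro b
          exact key _ b le_rfl
        intro z _
        have hz : z = Fin.snoc (Fin.init z) (z (Fin.last ℓ)) := (Fin.snoc_init_self z).symm
        have : z (Fin.last ℓ) = 0 ∨ z (Fin.last ℓ) = 1 := by
          have h2 := (z (Fin.last ℓ)).isLt
          have : (z (Fin.last ℓ) : ℕ) = 0 ∨ (z (Fin.last ℓ) : ℕ) = 1 := by omega
          rcases this with h | h
          · exact Or.inl (Fin.ext h)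
          · exact Or.inr (Fin.ext h)
        rcases this with h | h
        · rw [hz, h]; exact hbot _
        · rw [hz, h]; exact htop _

section ProbLemmas

open Classical in
lemma binProb_eq_filter {V : Type*} [Fintype V] (p : ℝ) (E : Finset V → Prop) :
    binProb p E = ∑ A ∈ Finset.univ.filter (fun A => E A),
      p ^ A.card * (1 - p) ^ (Fintype.card V - A.card) := by
  unfold binProb
  rw [Finset.sum_filter]
  refine Finset.sum_congr rfl fun A _ => ?_
  rw [Set.indicator_apply]
  simp only [Set.mem_setOf_eq]

lemma binProb_mono {V : Type*} [Fintype V] (p : ℝ) (hp0 : 0 ≤ p) (hp1 : p ≤ 1)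
    {D E : Finset V → Prop} (h : ∀ A, D A → E A) : binProb p D ≤ binProb p E := by
  unfold binProb
  refine Finset.sum_le_sum fun A _ => ?_
  refine Set.indicator_le_indicator_of_subset (fun B hB => h B hB) (fun B => ?_) A
  exact mul_nonneg (pow_nonneg hp0 _) (pow_nonneg (by linarith) _)

lemma sum_powerset_weight {V : Type*} [DecidableEq V] (p : ℝ) (s : Finset V) :
    ∑ t ∈ s.powerset, p ^ t.card * (1 - p) ^ (s.card - t.card) = 1 := by
  have h := Finset.prod_add (fun _ : V => p) (fun _ : V => (1 - p)) s
  simp only [Finset.prod_const] at h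
  have h1 : ((p + (1 - p)) : ℝ) = 1 := by ring
  rw [h1, one_pow] at h
  calc ∑ t ∈ s.powerset, p ^ t.card * (1 - p) ^ (s.card - t.card)
      = ∑ t ∈ s.powerset, p ^ t.card * (1 - p) ^ (s \ t).card :=
        Finset.sum_congr rfl (fun t ht => by
          rw [Finset.card_sdiff_of_subset (Finset.mem_powerset.mp ht)])
    _ = 1 := h.symm

open Classical in
/-- Marginalization: if the event depends only on the intersection with `Qf`,
the probability is a sum over subsets of `Qf`. -/
lemma binProb_marginal {V : Type*} [Fintype V] [DecidableEq V] (p : ℝ) (Qf : Finset V)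
    (D : Finset V → Prop) (hD : ∀ A : Finset V, D A ↔ D (A ∩ Qf)) :
    binProb p D = ∑ A₁ ∈ Qf.powerset.filter (fun A₁ => D A₁),
      p ^ A₁.card * (1 - p) ^ (Qf.card - A₁.card) := by
  rw [binProb_eq_filter, Finset.sum_filter, Finset.sum_filter]
  have hstep : ∑ A : Finset V, (if D A then p ^ A.card * (1 - p) ^ (Fintype.card V - A.card)
        else 0) =
      ∑ x ∈ Qf.powerset ×ˢ Qfᶜ.powerset, (if D (x.1 ∪ x.2) then
        p ^ (x.1 ∪ x.2).card * (1 - p) ^ (Fintype.card V - (x.1 ∪ x.2).card) else 0) := by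
    refine Finset.sum_nbij' (fun A => (A ∩ Qf, A \ Qf)) (fun x => x.1 ∪ x.2) ?_ ?_ ?_ ?_ ?_
    · intro A _
      rw [Finset.mem_product]
      constructor
      · exact Finset.mem_powerset.mpr Finset.inter_subset_right
      · refine Finset.mem_powerset.mpr fun a ha => ?_
        rw [Finset.mem_compl]
        exact (Finset.mem_sdiff.mp ha).2
    · intro x _; exact Finset.mem_univ _
    · intro A _
      simp only
      rw [Finset.union_comm, Finset.sdiff_union_inter]
    · intro x hx
      rw [Finset.mem_product] at hx
      have h1 : x.1 ⊆ Qf := Finset.mem_powerset.mp hx.1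
      have h2 : x.2 ⊆ Qfᶜ := Finset.mem_powerset.mp hx.2
      have hx1 : (x.1 ∪ x.2) ∩ Qf = x.1 := by
        ext a
        simp only [Finset.mem_inter, Finset.mem_union]
        constructor
        · rintro ⟨h | h, haQ⟩
          · exact h
          · exact absurd haQ (Finset.mem_compl.mp (h2 h))
        · intro h; exact ⟨Or.inl h, h1 h⟩
      have hx2 : (x.1 ∪ x.2) \ Qf = x.2 := by
        ext a
        simp only [Finset.mem_sdiff, Finset.mem_union]
        constructor
        · rintro ⟨h | h, haQ⟩
          · exact absurd (h1 h) haQ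
          · exact h
        · intro h; exact ⟨Or.inr h, Finset.mem_compl.mp (h2 h)⟩
      rw [Prod.ext_iff]
      exact ⟨hx1, hx2⟩
    · intro A _
      simp only
      rw [Finset.union_comm, Finset.sdiff_union_inter]
  rw [hstep, Finset.sum_product]
  refine Finset.sum_congr rfl fun A₁ hA₁ => ?_
  have hA₁Q : A₁ ⊆ Qf := Finset.mem_powerset.mp hA₁
  have hinner : ∀ A₂ ∈ Qfᶜ.powerset,
      (if D (A₁ ∪ A₂) then
        p ^ (A₁ ∪ A₂).card * (1 - p) ^ (Fintype.card V - (A₁ ∪ A₂).card) else 0) =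
      (if D A₁ then p ^ A₁.card * (1 - p) ^ (Qf.card - A₁.card) else 0) *
        (p ^ A₂.card * (1 - p) ^ (Qfᶜ.card - A₂.card)) := by
    intro A₂ hA₂
    have hA₂Q : A₂ ⊆ Qfᶜ := Finset.mem_powerset.mp hA₂
    have hdisj : Disjoint A₁ A₂ := by
      refine Finset.disjoint_left.mpr fun a ha1 ha2 => ?_
      exact (Finset.mem_compl.mp (hA₂Q ha2)) (hA₁Q ha1)
    have hDeq : D (A₁ ∪ A₂) ↔ D A₁ := by
      rw [hD (A₁ ∪ A₂)]
      have : (A₁ ∪ A₂) ∩ Qf = A₁ := by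
        ext a
        simp only [Finset.mem_inter, Finset.mem_union]
        constructor
        · rintro ⟨h | h, haQ⟩
          · exact h
          · exact absurd haQ (Finset.mem_compl.mp (hA₂Q h))
        · intro h; exact ⟨Or.inl h, hA₁Q h⟩
      rw [this]
    by_cases hDA : D A₁
    · rw [if_pos (hDeq.mpr hDA), if_pos hDA]
      have hcard : (A₁ ∪ A₂).card = A₁.card + A₂.card := Finset.card_union_of_disjoint hdisj
      have hc1 : A₁.card ≤ Qf.card := Finset.card_le_card hA₁Q
      have hc2 : A₂.card ≤ Qfᶜ.card := Finset.card_le_card hA₂Q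
      have hCV : Fintype.card V = Qf.card + Qfᶜ.card := (Finset.card_add_card_compl Qf).symm
      have hexp : Fintype.card V - (A₁.card + A₂.card) =
          (Qf.card - A₁.card) + (Qfᶜ.card - A₂.card) := by omega
      rw [hcard, hexp, pow_add, pow_add]
      ring
    · rw [if_neg (fun h => hDA (hDeq.mp h)), if_neg hDA, zero_mul]
  rw [Finset.sum_congr rfl hinner, ← Finset.mul_sum, sum_powerset_weight p Qfᶜ, mul_one]

end ProbLemmas

/-- Coupling lemma: the probability that an arbitrary cube
`Q ⊆ [n]^d` of dimension `ℓ` is internally spanned is at most `P(ℓ,p)`. -/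
theorem arbitrary_cube_coupling {n d : ℕ} (ℓ : ℕ) (p : ℝ) (hp0 : 0 < p) (hp1 : p < 1)
    (Q : Set (Fin d → Fin n)) (hQ : IsCube Q) (hdim : cubeDim Q = ℓ) :
    binProb p (fun A : Finset (Fin d → Fin n) =>
        IntSpans n d (↑A : Set (Fin d → Fin n)) Q) ≤ Pprob ℓ p := by
  classical
  obtain ⟨ι, hinj, hhom, hspan⟩ := exists_embed ℓ Q hQ hdim
  have hQfin : Q.Finite := Set.toFinite Q
  set Qf : Finset (Fin d → Fin n) := hQfin.toFinset with hQf
  have hQfc : (↑Qf : Set (Fin d → Fin n)) = Q := hQfin.coe_toFinset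
  set Rf : Finset (Fin ℓ → Fin 2) := Qf.image ι with hRf
  have hinjQf : Set.InjOn ι ↑Qf := by rw [hQfc]; exact hinj
  have hRfcard : Rf.card = Qf.card := Finset.card_image_of_injOn hinjQf
  set D : Finset (Fin d → Fin n) → Prop :=
    fun A => IntSpans n d (↑A : Set (Fin d → Fin n)) Q with hDdef
  have hD : ∀ A, D A ↔ D (A ∩ Qf) := by
    intro A
    have hADQ : (↑(A ∩ Qf) : Set (Fin d → Fin n)) ∩ Q = ↑A ∩ Q := by
      rw [Finset.coe_inter, hQfc, Set.inter_assoc, Set.inter_self]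
    simp only [hDdef, IntSpans, hADQ]
  set E₂ : Finset (Fin ℓ → Fin 2) → Prop := fun B =>
    bootClosure (gridAdj 2 ℓ) 2 (↑(B ∩ Rf) : Set (Fin ℓ → Fin 2)) = Set.univ with hE₂def
  have hE₂ : ∀ B, E₂ B ↔ E₂ (B ∩ Rf) := by
    intro B
    simp only [hE₂def, Finset.inter_assoc, Finset.inter_self]
  -- the key combinatorial implication
  have hkey : ∀ A₁ ∈ Qf.powerset, D A₁ → E₂ (A₁.image ι) := by
    intro A₁ hA₁ hDA
    have hA₁Qf : A₁ ⊆ Qf := Finset.mem_powerset.mp hA₁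
    have hA₁Q : (↑A₁ : Set (Fin d → Fin n)) ⊆ Q := by
      rw [← hQfc]; exact_mod_cast hA₁Qf
    have hclA : bootClosure (gridAdj n d) 2 (↑A₁ : Set (Fin d → Fin n)) = Q := by
      have : (↑A₁ : Set (Fin d → Fin n)) ∩ Q = ↑A₁ := Set.inter_eq_left.mpr hA₁Q
      rw [hDdef] at hDA
      unfold IntSpans at hDA
      rwa [this] at hDA
    have himg : ι '' (bootClosure (gridAdj n d) 2 (↑A₁ : Set (Fin d → Fin n))) ⊆
        bootClosure (gridAdj 2 ℓ) 2 (ι '' ↑A₁) :=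
      bootClosure_image (gridAdj n d) hA₁Q (by rw [hclA]) hinj hhom
    rw [hclA] at himg
    have h1 : bootClosure (gridAdj 2 ℓ) 2 (ι '' Q) ⊆
        bootClosure (gridAdj 2 ℓ) 2 (ι '' ↑A₁) :=
      le_trans (bootClosure_mono _ _ himg) (bootClosure_idem (gridAdj 2 ℓ) _)
    have hsub : A₁.image ι ⊆ Rf := Finset.image_subset_image hA₁Qf
    have hint : A₁.image ι ∩ Rf = A₁.image ι := Finset.inter_eq_left.mpr hsub
    rw [hE₂def]
    simp only [hint, Finset.coe_image]
    refine Set.eq_univ_of_univ_subset ?_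
    calc (Set.univ : Set (Fin ℓ → Fin 2)) = bootClosure (gridAdj 2 ℓ) 2 (ι '' Q) :=
          hspan.symm
      _ ⊆ _ := h1
  -- assembling the probability estimate
  have hq0 : (0 : ℝ) ≤ 1 - p := by linarith
  calc binProb p D
      = ∑ A₁ ∈ Qf.powerset.filter (fun A₁ => D A₁),
          p ^ A₁.card * (1 - p) ^ (Qf.card - A₁.card) := binProb_marginal p Qf D hD
    _ = ∑ B₁ ∈ (Qf.powerset.filter (fun A₁ => D A₁)).image (fun A₁ => A₁.image ι),
          p ^ B₁.card * (1 - p) ^ (Rf.card - B₁.card) := by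
        rw [Finset.sum_image ?_]
        · refine Finset.sum_congr rfl fun A₁ hA₁ => ?_
          have hA₁Qf : A₁ ⊆ Qf :=
            Finset.mem_powerset.mp (Finset.mem_filter.mp hA₁).1
          have hcard : (A₁.image ι).card = A₁.card :=
            Finset.card_image_of_injOn (fun x hx y hy hxy =>
              hinjQf (hA₁Qf hx) (hA₁Qf hy) hxy)
          rw [hcard, hRfcard]
        · intro x hx y hy hxy
          have hxy : x.image ι = y.image ι := hxy
          have hxQf : x ⊆ Qf := Finset.mem_powerset.mp (Finset.mem_filter.mp hx).1
          have hyQf : y ⊆ Qf := Finset.mem_powerset.mp (Finset.mem_filter.mp hy).1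
          ext a
          constructor
          · intro ha
            have : ι a ∈ y.image ι := by rw [← hxy]; exact Finset.mem_image_of_mem ι ha
            obtain ⟨b, hb, hba⟩ := Finset.mem_image.mp this
            rwa [← hinjQf (hyQf hb) (hxQf ha) hba]
          · intro ha
            have : ι a ∈ x.image ι := by rw [hxy]; exact Finset.mem_image_of_mem ι ha
            obtain ⟨b, hb, hba⟩ := Finset.mem_image.mp this
            rwa [← hinjQf (hxQf hb) (hyQf ha) hba]
    _ ≤ ∑ B₁ ∈ Rf.powerset.filter (fun B₁ => E₂ B₁),
          p ^ B₁.card * (1 - p) ^ (Rf.card - B₁.card) := by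
        refine Finset.sum_le_sum_of_subset_of_nonneg ?_ (fun B₁ _ _ =>
          mul_nonneg (pow_nonneg hp0.le _) (pow_nonneg hq0 _))
        intro B₁ hB₁
        obtain ⟨A₁, hA₁, rfl⟩ := Finset.mem_image.mp hB₁
        have hA₁' := Finset.mem_filter.mp hA₁
        refine Finset.mem_filter.mpr ⟨?_, hkey A₁ hA₁'.1 hA₁'.2⟩
        exact Finset.mem_powerset.mpr
          (Finset.image_subset_image (Finset.mem_powerset.mp hA₁'.1))
    _ = binProb p E₂ := (binProb_marginal p Rf E₂ hE₂).symm
    _ ≤ binProb p (fun B : Finset (Fin ℓ → Fin 2) =>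
          bootClosure (gridAdj 2 ℓ) 2 (↑B : Set (Fin ℓ → Fin 2)) = Set.univ) := by
        refine binProb_mono p hp0.le hp1.le fun B hB => ?_
        rw [hE₂def] at hB
        refine Set.eq_univ_of_univ_subset ?_
        rw [← hB]
        refine bootClosure_mono _ _ ?_
        rw [Finset.coe_inter]
        exact Set.inter_subset_left
    _ = Pprob ℓ p := rfl
end
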